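/- arXiv:2507.16703 — 5 statements merged into one kernel-verified Lean document; each statement's English description precedes it below -/
import Mathlib

section
/- Let X be a random variable with bounded density g (g(x) ≤ C for all x) on [0,∞), B an independent standard Brownian motion, and Λ : [0,∞) → [0,∞) a nondecreasing right-continuous function with Λ_0 ≥ 0. Let τ = inf{t ≥ 0 : X + B_t − Λ_t ≤ 0}. Then for each t > 0 the measure ν_t(A) = ∫_0^∞ P(x + B_t − Λ_t ∈ A, τ^x > t) g(x) dx on [0,∞) is absolutely continuous with density Ṽ(t,·) satisfying Ṽ(t,y) ≤ C·Φ((Λ_t + y)/√t) for a.e. y ≥ 0, where Φ is the standard normal CDF. -/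
open MeasureTheory ProbabilityTheory Filter
open scoped ENNReal NNReal Topology

/-- The standard Gaussian cumulative distribution function. -/
noncomputable def stdGaussianCDF (x : ℝ) : ℝ :=
  (Real.sqrt (2 * Real.pi))⁻¹ * ∫ t in Set.Iic x, Real.exp (-t ^ 2 / 2)

lemma stdGaussianCDF_nonneg (x : ℝ) : 0 ≤ stdGaussianCDF x :=
  mul_nonneg (inv_nonneg.mpr (Real.sqrt_nonneg _))
    (integral_nonneg fun _ => (Real.exp_pos _).le)

lemma gaussianReal_Iic_eq (t : ℝ) (ht : 0 < t) (a : ℝ) :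
    gaussianReal 0 (Real.toNNReal t) (Set.Iic a)
      = ENNReal.ofReal (stdGaussianCDF (a / Real.sqrt t)) := by
  have hst : (0:ℝ) < Real.sqrt t := Real.sqrt_pos.mpr ht
  have hnn : (⟨Real.sqrt t ^ 2, sq_nonneg _⟩ : ℝ≥0) * 1 = Real.toNNReal t := by
    ext
    simp [Real.sq_sqrt ht.le, Real.coe_toNNReal _ ht.le]
  have hmap : (gaussianReal 0 1).map (fun x => Real.sqrt t * x)
      = gaussianReal 0 (Real.toNNReal t) := by
    rw [gaussianReal_map_const_mul (Real.sqrt t), mul_zero]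
    exact congrArg (gaussianReal 0) hnn
  have hpre : (fun x => Real.sqrt t * x) ⁻¹' Set.Iic a = Set.Iic (a / Real.sqrt t) := by
    ext x
    simp only [Set.mem_preimage, Set.mem_Iic]
    rw [le_div_iff₀ hst, mul_comm]
  rw [← hmap, Measure.map_apply (measurable_const_mul _) measurableSet_Iic, hpre,
    gaussianReal_apply_eq_integral 0 one_ne_zero]
  congr 1
  rw [stdGaussianCDF, ← integral_const_mul]
  refine setIntegral_congr_fun measurableSet_Iic fun x _ => ?_
  rw [gaussianPDFReal]
  norm_num

/-- Density bound for the surviving mass: if X has bounded density g <= C supported on [0,inf),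
B is an independent Gaussian of variance t, Lambda_t >= 0, and E is any (survival) event, then
the measure A -> P(X + B - Lambda_t in A, E) on [0,inf) has a density V with
V(y) <= C * Phi((Lambda_t + y)/sqrt(t)) a.e. on [0,inf). -/
theorem surviving_density_bound {Ω : Type*} [MeasurableSpace Ω]
    (P : Measure Ω) [IsProbabilityMeasure P]
    (g : ℝ → ℝ) (hgm : Measurable g) (hg0 : ∀ x, 0 ≤ g x)
    (C : ℝ) (hgC : ∀ x, g x ≤ C) (hgsupp : ∀ x < 0, g x = 0)
    (X B : Ω → ℝ) (hXm : Measurable X) (hBm : Measurable B)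
    (t : ℝ) (ht : 0 < t) (Λt : ℝ) (hΛt : 0 ≤ Λt)
    (hX : Measure.map X P = volume.withDensity fun x => ENNReal.ofReal (g x))
    (hB : Measure.map B P = gaussianReal 0 (Real.toNNReal t))
    (hindep : IndepFun X B P)
    (E : Set Ω) (hE : MeasurableSet E) :
    ∃ V : ℝ → ℝ, Measurable V ∧ (∀ y, 0 ≤ V y) ∧
      (∀ A : Set ℝ, MeasurableSet A → A ⊆ Set.Ici 0 →
        ((Measure.map (fun ω => X ω + B ω - Λt) (P.restrict E)) A).toReal = ∫ y in A, V y) ∧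
      (∀ᵐ y ∂(volume.restrict (Set.Ici (0:ℝ))),
        V y ≤ C * stdGaussianCDF ((Λt + y) / Real.sqrt t)) := by
  have hv : Real.toNNReal t ≠ 0 := by
    simp [Real.toNNReal_eq_zero, not_le, ht]
  have hC : 0 ≤ C := le_trans (hg0 0) (hgC 0)
  set v := Real.toNNReal t with hvdef
  set pdf : ℝ → ℝ≥0∞ := gaussianPDF 0 v with hpdf
  have hpdfm : Measurable pdf := measurable_gaussianPDF 0 v
  set f : Ω → ℝ := fun ω => X ω + B ω - Λt with hfdef
  have hfm : Measurable f := (hXm.add hBm).sub measurable_const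
  set h : ℝ → ℝ≥0∞ := fun y => ∫⁻ x, ENNReal.ofReal (g x) * pdf (Λt + y - x) with hhdef
  have hFm : Measurable (fun p : ℝ × ℝ => ENNReal.ofReal (g p.2) * pdf (Λt + p.1 - p.2)) :=
    ((hgm.comp measurable_snd).ennreal_ofReal).mul
      (hpdfm.comp ((measurable_const.add measurable_fst).sub measurable_snd))
  have hhm : Measurable h := hFm.lintegral_prod_right'
  -- the law of f under P is withDensity h
  have hprod : Measure.map (fun ω => (X ω, B ω)) P
      = (Measure.map X P).prod (Measure.map B P) :=
    (indepFun_iff_map_prod_eq_prod_map_map hXm.aemeasurable hBm.aemeasurable).mp hindep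
  have hqm : Measurable (fun p : ℝ × ℝ => p.1 + p.2 - Λt) :=
    (measurable_fst.add measurable_snd).sub measurable_const
  have hμeq : Measure.map f P = volume.withDensity h := by
    ext A hA
    have hfc : f = (fun p : ℝ × ℝ => p.1 + p.2 - Λt) ∘ (fun ω => (X ω, B ω)) := rfl
    rw [withDensity_apply _ hA, hfc, ← Measure.map_map hqm (hXm.prodMk hBm), hprod, hX, hB,
      Measure.map_apply hqm hA, Measure.prod_apply (hqm hA)]
    have hinner : ∀ x : ℝ,
        (gaussianReal 0 v) (Prod.mk x ⁻¹' ((fun p : ℝ × ℝ => p.1 + p.2 - Λt) ⁻¹' A))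
          = ∫⁻ y in A, pdf (Λt + y - x) := by
      intro x
      have hset : (Prod.mk x ⁻¹' ((fun p : ℝ × ℝ => p.1 + p.2 - Λt) ⁻¹' A))
          = (fun b => b + (x - Λt)) ⁻¹' A := by
        ext b
        simp only [Set.mem_preimage]
        rw [show x + b - Λt = b + (x - Λt) from by ring]
      have hptw : ∀ b, ((fun b => b + (x - Λt)) ⁻¹' A).indicator pdf b
          = (A.indicator fun y => pdf (y - (x - Λt))) (b + (x - Λt)) := by
        intro b
        by_cases hb : b + (x - Λt) ∈ A
        · rw [Set.indicator_of_mem hb, Set.indicator_of_mem (by exact hb)]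
          simp
        · rw [Set.indicator_of_notMem hb, Set.indicator_of_notMem (by exact hb)]
      rw [hset, gaussianReal_apply 0 hv, ← lintegral_indicator (measurable_add_const _ hA),
        lintegral_congr hptw,
        lintegral_add_right_eq_self (A.indicator fun y => pdf (y - (x - Λt))) (x - Λt),
        lintegral_indicator hA]
      refine setLIntegral_congr_fun hA (fun y _ => ?_)
      congr 1
      ring
    rw [lintegral_withDensity_eq_lintegral_mul _ hgm.ennreal_ofReal
      (measurable_measure_prodMk_left (hqm hA))]
    simp only [Pi.mul_apply, hinner]
    calc ∫⁻ x, ENNReal.ofReal (g x) * ∫⁻ y in A, pdf (Λt + y - x)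
        = ∫⁻ x, ∫⁻ y in A, ENNReal.ofReal (g x) * pdf (Λt + y - x) := by
          refine lintegral_congr fun x => ?_
          rw [lintegral_const_mul _ (show Measurable fun y : ℝ => pdf (Λt + y - x) from
            hpdfm.comp (by fun_prop))]
      _ = ∫⁻ y in A, ∫⁻ x, ENNReal.ofReal (g x) * pdf (Λt + y - x) := by
          refine lintegral_lintegral_swap ?_
          exact (((hgm.comp measurable_fst).ennreal_ofReal).mul
            (hpdfm.comp ((measurable_const.add measurable_snd).sub measurable_fst))).aemeasurable
      _ = ∫⁻ y in A, h y := rfl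
  -- pointwise bound on h
  have hIic : ∀ a : ℝ, ∫⁻ x in Set.Ici (0:ℝ), pdf (a - x) = gaussianReal 0 v (Set.Iic a) := by
    intro a
    have hptw : ∀ x, (Set.Ici (0:ℝ)).indicator (fun x => pdf (a - x)) x
        = (Set.Iic a).indicator pdf (a - x) := by
      intro x
      by_cases hx : x ∈ Set.Ici (0:ℝ)
      · rw [Set.indicator_of_mem hx, Set.indicator_of_mem
          (Set.mem_Iic.mpr (by simp only [Set.mem_Ici] at hx; linarith))]
      · rw [Set.indicator_of_notMem hx, Set.indicator_of_notMem
          (by simp only [Set.mem_Ici, not_le] at hx ⊢; simp [Set.mem_Iic]; linarith)]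
    rw [← lintegral_indicator measurableSet_Ici, lintegral_congr hptw,
      (Measure.measurePreserving_sub_left volume a).lintegral_comp
        (hpdfm.indicator measurableSet_Iic),
      lintegral_indicator measurableSet_Iic, gaussianReal_apply 0 hv]
  have hbound : ∀ y : ℝ, h y ≤ ENNReal.ofReal (C * stdGaussianCDF ((Λt + y) / Real.sqrt t)) := by
    intro y
    have h1 : h y ≤ ∫⁻ x, (Set.Ici (0:ℝ)).indicator
        (fun x => ENNReal.ofReal C * pdf (Λt + y - x)) x := by
      refine lintegral_mono fun x => ?_
      by_cases hx : x ∈ Set.Ici (0:ℝ)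
      · rw [Set.indicator_of_mem hx]
        exact mul_le_mul_left (ENNReal.ofReal_le_ofReal (hgC x)) _
      · rw [Set.indicator_of_notMem hx,
          hgsupp x (by simpa [Set.mem_Ici, not_le] using hx)]
        simp
    have h2 : ∫⁻ x, (Set.Ici (0:ℝ)).indicator
        (fun x => ENNReal.ofReal C * pdf (Λt + y - x)) x
        = ENNReal.ofReal C * ∫⁻ x in Set.Ici (0:ℝ), pdf ((Λt + y) - x) := by
      rw [lintegral_indicator measurableSet_Ici,
        lintegral_const_mul _ (show Measurable fun x : ℝ => pdf (Λt + y - x) from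
          hpdfm.comp (by fun_prop))]
    refine h1.trans ?_
    rw [h2, hIic (Λt + y), gaussianReal_Iic_eq t ht (Λt + y),
      ← ENNReal.ofReal_mul hC]
  -- define V via Radon-Nikodym
  set ν := Measure.map f (P.restrict E) with hνdef
  have hνμ : ν ≤ Measure.map f P := Measure.map_mono Measure.restrict_le_self hfm
  have hac : ν ≪ volume := by
    refine (Measure.absolutelyContinuous_of_le hνμ).trans ?_
    rw [hμeq]
    exact withDensity_absolutelyContinuous _ _
  haveI : IsFiniteMeasure ν := by
    constructor
    rw [hνdef, Measure.map_apply hfm MeasurableSet.univ]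
    exact measure_lt_top _ _
  refine ⟨fun y => (ν.rnDeriv volume y).toReal,
    (Measure.measurable_rnDeriv ν volume).ennreal_toReal,
    fun y => ENNReal.toReal_nonneg, ?_, ?_⟩
  · intro A hA _
    rw [← Measure.setLIntegral_rnDeriv hac A]
    exact (integral_toReal (Measure.measurable_rnDeriv ν volume).aemeasurable
      (ae_restrict_of_ae (Measure.rnDeriv_lt_top ν volume))).symm
  · have hle : ν.rnDeriv volume ≤ᵐ[volume] h := by
      refine ae_le_of_forall_setLIntegral_le_of_sigmaFinite
        (Measure.measurable_rnDeriv ν volume) fun s hs _ => ?_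
      calc ∫⁻ x in s, ν.rnDeriv volume x = ν s := Measure.setLIntegral_rnDeriv hac s
        _ ≤ Measure.map f P s := Measure.le_iff'.mp hνμ s
        _ = ∫⁻ x in s, h x := by rw [hμeq, withDensity_apply _ hs]
    refine ae_restrict_of_ae ?_
    filter_upwards [hle] with y hy
    exact ENNReal.toReal_le_of_le_ofReal
      (mul_nonneg hC (stdGaussianCDF_nonneg _)) (hy.trans (hbound y))
end

section
/- If g : [0,∞) → [0,∞) is measurable, bounded, and there exists x₀ > 0 with ∫_0^{x₀} g(y) dy > 2x₀, then no globally continuous solution of the McKean–Vlasov free-boundary equation Λ_t = ∫_0^∞ P(inf_{s≤t}(x + B_s − Λ_s) ≤ 0) g(x) dx exists. -/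
open MeasureTheory ProbabilityTheory Filter
open scoped ENNReal NNReal Topology

/-- The error function `erf`. -/
noncomputable def errorFun (x : ℝ) : ℝ :=
  2 / Real.sqrt Real.pi * ∫ u in (0:ℝ)..x, Real.exp (-u ^ 2)

/-- `W` is the law of a standard Brownian motion on `ℝ → ℝ` (restricted to times `≥ 0`):
a probability measure with a.e. continuous paths started at `0`, independent increments, and
Gaussian increments of the right variance. -/
def IsStdBrownian (W : Measure (ℝ → ℝ)) : Prop :=
  IsProbabilityMeasure W ∧
  (∀ᵐ b ∂W, Continuous b ∧ b 0 = 0) ∧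
  (∀ n : ℕ, ∀ t : Fin (n + 1) → ℝ, Monotone t → (∀ i, 0 ≤ t i) →
    iIndepFun
      (fun i : Fin n => fun b : ℝ → ℝ => b (t i.succ) - b (t i.castSucc)) W) ∧
  (∀ s t : ℝ, 0 ≤ s → s ≤ t →
    Measure.map (fun b : ℝ → ℝ => b t - b s) W = gaussianReal 0 (Real.toNNReal (t - s)))

section Helpers
open Set Real

lemma half_le_gauss (v : ℝ≥0) : (2:ℝ≥0∞)⁻¹ ≤ gaussianReal 0 v (Set.Iic 0) := by
  by_cases hv : v = 0
  · subst hv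
    rw [gaussianReal_zero_var, Measure.dirac_apply' _ measurableSet_Iic]
    simp only [Set.indicator_of_mem (Set.mem_Iic.2 le_rfl), Pi.one_apply]
    exact ENNReal.inv_le_one.mpr one_le_two
  · have hmap := gaussianReal_map_const_mul (μ := 0) (v := v) (-1)
    have hv' : (NNReal.mk ((-1:ℝ)^2) (sq_nonneg _) * v : ℝ≥0) = v := by ext; show (-1:ℝ)^2 * (v:ℝ) = v; norm_num
    rw [mul_zero, hv'] at hmap
    have hmeas : Measurable fun x : ℝ => -1 * x := measurable_const_mul _
    have hsym : gaussianReal 0 v (Set.Ici 0) = gaussianReal 0 v (Set.Iic 0) := by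
      conv_rhs => rw [← hmap]
      rw [Measure.map_apply hmeas measurableSet_Iic]
      congr 1
      ext x
      simp
    have h1 : (1:ℝ≥0∞) ≤ gaussianReal 0 v (Set.Iic 0) + gaussianReal 0 v (Set.Ici 0) := by
      have := measure_union_le (μ := gaussianReal 0 v) (Set.Iic 0) (Set.Ici 0)
      rwa [Set.Iic_union_Ici, measure_univ] at this
    rw [hsym, ← two_mul] at h1
    rw [ENNReal.inv_le_iff_le_mul (by simp) (by simp)]
    exact h1


lemma integrableOn_exp_mul_Iic' {b : ℝ} (hb : 0 < b) (z : ℝ) :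
    IntegrableOn (fun x => Real.exp (b * x)) (Set.Iic z) := by
  have h1 : Integrable ((Set.Iic (b*z)).indicator Real.exp) :=
    (integrableOn_exp_Iic (b*z)).integrable_indicator measurableSet_Iic
  have h2 := h1.comp_mul_left' (R := b) hb.ne'
  have h3 : (fun x => (Set.Iic (b*z)).indicator Real.exp (b * x))
      = (Set.Iic z).indicator (fun x => Real.exp (b*x)) := by
    funext x
    by_cases hx : x ≤ z
    · rw [Set.indicator_of_mem (Set.mem_Iic.2 (mul_le_mul_of_nonneg_left hx hb.le)),
        Set.indicator_of_mem (Set.mem_Iic.2 hx)]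
    · rw [Set.indicator_of_notMem, Set.indicator_of_notMem]
      · exact fun h => hx (Set.mem_Iic.1 h)
      · intro h
        have := Set.mem_Iic.1 h
        push_neg at hx
        nlinarith
  rw [h3] at h2
  rwa [integrable_indicator_iff measurableSet_Iic] at h2

lemma integral_exp_mul_Iic' {b : ℝ} (hb : 0 < b) (z : ℝ) :
    ∫ x in Set.Iic z, Real.exp (b * x) = Real.exp (b * z) / b := by
  have hderiv : ∀ x ∈ Set.Iic z, HasDerivAt (fun y => Real.exp (b * y) / b) (Real.exp (b * x)) x := by
    intro x _
    have h : HasDerivAt (fun y : ℝ => b * y) b x := by simpa using (hasDerivAt_id x).const_mul b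
    have h1 := (Real.hasDerivAt_exp (b*x)).comp x h
    have h2 := h1.div_const b
    simpa [mul_div_cancel_right₀ _ hb.ne'] using h2
  have htend : Tendsto (fun y => Real.exp (b * y) / b) atBot (𝓝 0) := by
    have h1 : Tendsto (fun y : ℝ => b * y) atBot atBot :=
      Tendsto.const_mul_atBot hb tendsto_id
    have := (Real.tendsto_exp_atBot.comp h1).div_const b
    simpa using this
  have := integral_Iic_of_hasDerivAt_of_tendsto' hderiv (integrableOn_exp_mul_Iic hb z) htend
  simpa using this

lemma gauss_toReal (v : ℝ≥0) (hv : v ≠ 0) (z : ℝ) :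
    (gaussianReal 0 v (Set.Iic z)).toReal = ∫ x in Set.Iic z, gaussianPDFReal 0 v x := by
  rw [gaussianReal_apply_eq_integral 0 hv, ENNReal.toReal_ofReal
    (setIntegral_nonneg measurableSet_Iic fun x _ => gaussianPDFReal_nonneg _ _ _)]

lemma gauss_tail {v : ℝ≥0} (hv : v ≠ 0) {z : ℝ} (hz : z ≤ -1) :
    (gaussianReal 0 v (Set.Iic z)).toReal
      ≤ (√(2*π*v))⁻¹ * (2*(v:ℝ)) * Real.exp ((2*(v:ℝ))⁻¹ * z) := by
  have hvpos : (0:ℝ) < v := NNReal.coe_pos.mpr (pos_iff_ne_zero.mpr hv)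
  have h2v : (0:ℝ) < (2*(v:ℝ))⁻¹ := by positivity
  rw [gauss_toReal v hv z]
  have hle : ∀ x ∈ Set.Iic z, gaussianPDFReal 0 v x
      ≤ (√(2*π*v))⁻¹ * Real.exp ((2*(v:ℝ))⁻¹ * x) := by
    intro x hx
    have hx1 : x ≤ -1 := le_trans (Set.mem_Iic.1 hx) hz
    rw [gaussianPDFReal]
    apply mul_le_mul_of_nonneg_left _ (by positivity)
    apply Real.exp_le_exp.2
    rw [inv_mul_eq_div]
    apply div_le_div_of_nonneg_right ?_ (by positivity) |>.trans_eq rfl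
    · nlinarith
  calc ∫ x in Set.Iic z, gaussianPDFReal 0 v x
      ≤ ∫ x in Set.Iic z, (√(2*π*v))⁻¹ * Real.exp ((2*(v:ℝ))⁻¹ * x) := by
        apply setIntegral_mono_on (integrable_gaussianPDFReal _ _).restrict
          ((integrableOn_exp_mul_Iic h2v z).const_mul _) measurableSet_Iic hle
    _ = (√(2*π*v))⁻¹ * (Real.exp ((2*(v:ℝ))⁻¹ * z) / (2*(v:ℝ))⁻¹) := by
        rw [MeasureTheory.integral_const_mul, integral_exp_mul_Iic h2v]
    _ = (√(2*π*v))⁻¹ * (2*(v:ℝ)) * Real.exp ((2*(v:ℝ))⁻¹ * z) := by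
        field_simp


lemma half_le_gauss_toReal (v : ℝ≥0) : (1:ℝ)/2 ≤ (gaussianReal 0 v (Set.Iic 0)).toReal := by
  have h := half_le_gauss v
  have hfin : gaussianReal 0 v (Set.Iic 0) ≠ ∞ := measure_ne_top _ _
  have := ENNReal.toReal_mono hfin h
  simpa [ENNReal.toReal_inv] using this

lemma gauss_lb (v : ℝ≥0) (hv : v ≠ 0) {a : ℝ} (ha : 0 ≤ a) :
    (1:ℝ)/2 - a * (√(2*π*(v:ℝ)))⁻¹ ≤ (gaussianReal 0 v (Set.Iic (-a))).toReal := by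
  have hsplit : (∫ x in Set.Iic 0, gaussianPDFReal 0 v x)
      = (∫ x in Set.Iic (-a), gaussianPDFReal 0 v x)
        + ∫ x in Set.Ioc (-a) 0, gaussianPDFReal 0 v x := by
    rw [← setIntegral_union (Set.Iic_disjoint_Ioc le_rfl) measurableSet_Ioc
      (integrable_gaussianPDFReal _ _).restrict (integrable_gaussianPDFReal _ _).restrict,
      Set.Iic_union_Ioc_eq_Iic (neg_nonpos.2 ha)]
  have hbound : (∫ x in Set.Ioc (-a) 0, gaussianPDFReal 0 v x) ≤ a * (√(2*π*(v:ℝ)))⁻¹ := by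
    have h1 : ∀ x ∈ Set.Ioc (-a) 0, gaussianPDFReal 0 v x ≤ (√(2*π*(v:ℝ)))⁻¹ := by
      intro x _
      rw [gaussianPDFReal]
      nth_rewrite 2 [← mul_one ((√(2*π*(v:ℝ)))⁻¹)]
      apply mul_le_mul_of_nonneg_left _ (by positivity)
      apply Real.exp_le_one_iff.2
      apply div_nonpos_of_nonpos_of_nonneg (by nlinarith) (by positivity)
    calc (∫ x in Set.Ioc (-a) 0, gaussianPDFReal 0 v x)
        ≤ ∫ _x in Set.Ioc (-a) 0, (√(2*π*(v:ℝ)))⁻¹ :=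
          setIntegral_mono_on (integrable_gaussianPDFReal _ _).restrict
            (integrableOn_const measure_Ioc_lt_top.ne) measurableSet_Ioc h1
      _ = (√(2*π*(v:ℝ)))⁻¹ * (volume (Set.Ioc (-a) 0)).toReal := by
          rw [setIntegral_const, smul_eq_mul, measureReal_def]; ring
      _ ≤ a * (√(2*π*(v:ℝ)))⁻¹ := by
          rw [mul_comm]
          apply mul_le_mul_of_nonneg_right _ (by positivity)
          rw [Real.volume_Ioc]
          rw [ENNReal.toReal_ofReal (by linarith)]
          linarith
  have := half_le_gauss_toReal v
  rw [gauss_toReal v hv, hsplit] at this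
  rw [gauss_toReal v hv]
  linarith


lemma reflect (𝒲 : Measure (ℝ → ℝ)) (h𝒲 : IsStdBrownian 𝒲)
    (n : ℕ) (σ : ℕ → ℝ) (hmono : Monotone σ) (hσ0 : 0 ≤ σ 0) (c : ℝ) :
    𝒲 {b | ∃ k ≤ n, b (σ k) - b (σ 0) ≤ c}
      ≤ 2 * 𝒲 {b | b (σ n) - b (σ 0) ≤ c} := by
  classical
  obtain ⟨hP, hae, hind, hmap⟩ := h𝒲
  haveI := hP
  set X' : ℕ → (ℝ → ℝ) → ℝ := fun m b => b (σ (m+1)) - b (σ m) with hX'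
  set D : ℕ → (ℝ → ℝ) → ℝ := fun j b => b (σ j) - b (σ 0) with hDdef
  have hD : ∀ j b, D j b = ∑ m ∈ Finset.range j, X' m b := by
    intro j b
    exact (Finset.sum_range_sub (fun m => b (σ m)) j).symm
  have hXm' : ∀ m, Measurable (X' m) :=
    fun m => (measurable_pi_apply _).sub (measurable_pi_apply _)
  have hDm : ∀ j, Measurable (D j) :=
    fun j => (measurable_pi_apply _).sub (measurable_pi_apply _)
  have hσnn : ∀ m, 0 ≤ σ m := fun m => le_trans hσ0 (hmono (Nat.zero_le m))
  have hindX : iIndepFun (fun i : Fin n => X' (i : ℕ)) 𝒲 := by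
    have h := hind n (fun j : Fin (n+1) => σ (j : ℕ))
      (fun a b hab => hmono hab) (fun i => hσnn _)
    simpa only [Fin.val_succ, Fin.coe_castSucc] using h
  -- events
  set A : ℕ → Set (ℝ → ℝ) := fun k => {b | D k b ≤ c ∧ ∀ j < k, c < D j b} with hAdef
  set B : ℕ → Set (ℝ → ℝ) := fun k => {b | b (σ n) - b (σ k) ≤ 0} with hBdef
  have hAmeas : ∀ k, MeasurableSet (A k) := by
    intro k
    have : A k = (D k) ⁻¹' (Set.Iic c) ∩ ⋂ j ∈ Finset.range k, (D j) ⁻¹' (Set.Ioi c) := by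
      ext b
      simp [hAdef, Set.mem_iInter]
    rw [this]
    exact ((hDm k) measurableSet_Iic).inter
      (MeasurableSet.biInter (Finset.range k).countable_toSet
        fun j _ => (hDm j) measurableSet_Ioi)
  have hBmeas : ∀ k, MeasurableSet (B k) := by
    intro k
    exact measurableSet_le ((measurable_pi_apply (σ n)).sub (measurable_pi_apply (σ k))) measurable_const
  -- independence of A k and B k
  have hprod : ∀ k ≤ n, 𝒲 (A k ∩ B k) = 𝒲 (A k) * 𝒲 (B k) := by
    intro k hk
    have hiI := (iIndepFun_iff_iIndep (fun _ => inferInstance)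
      (fun i : Fin n => X' (i : ℕ)) 𝒲).1 hindX
    have hST : Disjoint {i : Fin n | (i : ℕ) < k} {i : Fin n | k ≤ (i : ℕ)} := by
      rw [Set.disjoint_left]
      intro i hi hi'
      simp only [Set.mem_setOf_eq] at hi hi'
      omega
    have hIndep := indep_iSup_of_disjoint (fun i : Fin n => (hXm' (i:ℕ)).comap_le) hiI hST
    set M1 : MeasurableSpace (ℝ → ℝ) :=
      ⨆ i ∈ {i : Fin n | (i : ℕ) < k}, MeasurableSpace.comap (X' (i : ℕ)) inferInstance with hM1
    set M2 : MeasurableSpace (ℝ → ℝ) :=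
      ⨆ i ∈ {i : Fin n | k ≤ (i : ℕ)}, MeasurableSpace.comap (X' (i : ℕ)) inferInstance with hM2
    have hXM1 : ∀ m < k, Measurable[M1] (X' m) := by
      intro m hm
      have hmn : m < n := lt_of_lt_of_le hm hk
      have h1 : Measurable[MeasurableSpace.comap (X' m) inferInstance] (X' m) :=
        fun s hs => ⟨s, hs, rfl⟩
      have h2 : MeasurableSpace.comap (X' m) inferInstance ≤ M1 := by
        have := le_biSup (f := fun i : Fin n => MeasurableSpace.comap (X' (i : ℕ)) inferInstance)
          (show (⟨m, hmn⟩ : Fin n) ∈ {i : Fin n | (i : ℕ) < k} from hm)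
        exact this
      exact h1.mono h2 le_rfl
    have hXM2 : ∀ m, k ≤ m → m < n → Measurable[M2] (X' m) := by
      intro m hm hmn
      have h1 : Measurable[MeasurableSpace.comap (X' m) inferInstance] (X' m) :=
        fun s hs => ⟨s, hs, rfl⟩
      have h2 : MeasurableSpace.comap (X' m) inferInstance ≤ M2 :=
        le_biSup (f := fun i : Fin n => MeasurableSpace.comap (X' (i : ℕ)) inferInstance)
          (show (⟨m, hmn⟩ : Fin n) ∈ {i : Fin n | k ≤ (i : ℕ)} from hm)
      exact h1.mono h2 le_rfl
    have hDM1 : ∀ j ≤ k, Measurable[M1] (D j) := by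
      intro j hj
      have heq : D j = fun b => ∑ m ∈ Finset.range j, X' m b := funext fun b => hD j b
      rw [heq]
      apply Finset.measurable_sum
      intro m hm
      exact hXM1 m (lt_of_lt_of_le (Finset.mem_range.1 hm) hj)
    have hA1 : MeasurableSet[M1] (A k) := by
      have : A k = (D k) ⁻¹' (Set.Iic c) ∩ ⋂ j ∈ Finset.range k, (D j) ⁻¹' (Set.Ioi c) := by
        ext b; simp [hAdef, Set.mem_iInter]
      rw [this]
      exact MeasurableSet.inter ((hDM1 k le_rfl) measurableSet_Iic)
        (MeasurableSet.biInter (Finset.range k).countable_toSet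
          fun j hj => (hDM1 j (le_of_lt (Finset.mem_range.1 hj))) measurableSet_Ioi)
    have hB2 : MeasurableSet[M2] (B k) := by
      have heq : B k = (fun b => ∑ m ∈ Finset.Ico k n, X' m b) ⁻¹' (Set.Iic 0) := by
        ext b
        have : ∑ m ∈ Finset.Ico k n, X' m b = b (σ n) - b (σ k) := by
          rw [Finset.sum_Ico_eq_sub _ hk, ← hD n b, ← hD k b]
          simp only [hDdef]
          ring
        simp only [hBdef, Set.mem_setOf_eq, Set.mem_preimage, Set.mem_Iic, this]
      rw [heq]
      have hsum : Measurable[M2] (fun b => ∑ m ∈ Finset.Ico k n, X' m b) := by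
        apply Finset.measurable_sum
        intro m hm
        exact hXM2 m (Finset.mem_Ico.1 hm).1 (Finset.mem_Ico.1 hm).2
      exact hsum measurableSet_Iic
    exact (Indep_iff _ _ _).1 hIndep _ _ hA1 hB2
  -- B k has probability at least 1/2
  have hBhalf : ∀ k ≤ n, (2:ℝ≥0∞)⁻¹ ≤ 𝒲 (B k) := by
    intro k hk
    have hmapk := hmap (σ k) (σ n) (hσnn k) (hmono hk)
    have : 𝒲 (B k) = (Measure.map (fun b : ℝ → ℝ => b (σ n) - b (σ k)) 𝒲) (Set.Iic 0) := by
      rw [Measure.map_apply (f := fun b : ℝ → ℝ => b (σ n) - b (σ k))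
        ((measurable_pi_apply (σ n)).sub (measurable_pi_apply (σ k))) measurableSet_Iic]
      rfl
    rw [this, hmapk]
    exact half_le_gauss _
  -- covering by first-entry events
  have hEsub : {b : ℝ → ℝ | ∃ k ≤ n, b (σ k) - b (σ 0) ≤ c} ⊆ ⋃ k ∈ Finset.range (n+1), A k := by
    intro b hb
    obtain ⟨k0, hk0n, hk0⟩ := hb
    have hex : ∃ j, j ≤ n ∧ D j b ≤ c := ⟨k0, hk0n, hk0⟩
    refine Set.mem_biUnion (Finset.mem_range.2 (Nat.lt_succ_of_le (Nat.find_spec hex).1)) ?_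
    refine ⟨(Nat.find_spec hex).2, fun j hj => ?_⟩
    have hmin := Nat.find_min hex hj
    push_neg at hmin
    exact hmin (le_trans (le_of_lt hj) (Nat.find_spec hex).1)
  have hABsub : ∀ k ≤ n, A k ∩ B k ⊆ {b : ℝ → ℝ | b (σ n) - b (σ 0) ≤ c} := by
    intro k hk b hb
    obtain ⟨⟨h1, _⟩, h2⟩ := hb
    simp only [hBdef, Set.mem_setOf_eq] at h2
    simp only [Set.mem_setOf_eq]
    have heq : b (σ n) - b (σ 0) = D k b + (b (σ n) - b (σ k)) := by
      simp only [hDdef]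
      ring
    rw [heq]
    linarith
  have hdisj : (↑(Finset.range (n+1)) : Set ℕ).PairwiseDisjoint (fun k => A k ∩ B k) := by
    intro k _ k' _ hne
    apply Set.disjoint_left.2
    intro b hb hb'
    rcases Nat.lt_or_ge k k' with h | h
    · exact absurd hb.1.1 (not_le.2 (hb'.1.2 k h))
    · have h' : k' < k := lt_of_le_of_ne h (Ne.symm hne)
      exact absurd hb'.1.1 (not_le.2 (hb.1.2 k' h'))
  calc 𝒲 {b : ℝ → ℝ | ∃ k ≤ n, b (σ k) - b (σ 0) ≤ c}
      ≤ 𝒲 (⋃ k ∈ Finset.range (n+1), A k) := measure_mono hEsub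
    _ ≤ ∑ k ∈ Finset.range (n+1), 𝒲 (A k) := measure_biUnion_finset_le _ _
    _ ≤ ∑ k ∈ Finset.range (n+1), 2 * (𝒲 (A k) * 𝒲 (B k)) := by
        apply Finset.sum_le_sum
        intro k hk
        have hk' : k ≤ n := Nat.lt_succ_iff.1 (Finset.mem_range.1 hk)
        have h1 : (1:ℝ≥0∞) ≤ 2 * 𝒲 (B k) := by
          calc (1:ℝ≥0∞) = 2 * 2⁻¹ := by
                rw [ENNReal.mul_inv_cancel two_ne_zero ENNReal.ofNat_ne_top]
            _ ≤ 2 * 𝒲 (B k) := mul_le_mul_right (hBhalf k hk') 2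
        calc 𝒲 (A k) = 𝒲 (A k) * 1 := (mul_one _).symm
          _ ≤ 𝒲 (A k) * (2 * 𝒲 (B k)) := mul_le_mul_right h1 _
          _ = 2 * (𝒲 (A k) * 𝒲 (B k)) := by ring
    _ = 2 * ∑ k ∈ Finset.range (n+1), 𝒲 (A k ∩ B k) := by
        rw [Finset.mul_sum]
        apply Finset.sum_congr rfl
        intro k hk
        rw [hprod k (Nat.lt_succ_iff.1 (Finset.mem_range.1 hk))]
    _ = 2 * 𝒲 (⋃ k ∈ Finset.range (n+1), A k ∩ B k) := by
        rw [measure_biUnion_finset hdisj fun k _ => (hAmeas k).inter (hBmeas k)]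
    _ ≤ 2 * 𝒲 {b : ℝ → ℝ | b (σ n) - b (σ 0) ≤ c} := by
        apply mul_le_mul_right
        apply measure_mono
        apply Set.iUnion₂_subset
        intro k hk
        exact hABsub k (Nat.lt_succ_iff.1 (Finset.mem_range.1 hk))


lemma upper_bound (𝒲 : Measure (ℝ → ℝ)) (h𝒲 : IsStdBrownian 𝒲)
    {t : ℝ} (ht : 0 < t) (c : ℝ) :
    𝒲 {b | ∃ s ∈ Set.Icc (0:ℝ) t, b s ≤ c}
      ≤ 2 * gaussianReal 0 (Real.toNNReal t) (Set.Iic (c+1)) := by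
  classical
  obtain ⟨hP, hae, hind, hmap⟩ := h𝒲
  haveI := hP
  obtain ⟨e, he⟩ : ∃ e : ℕ → ℚ, Function.Surjective e :=
    ⟨_, (Denumerable.eqv ℚ).symm.surjective⟩
  set u : ℕ → ℝ := fun m => max 0 (min t ((e m : ℝ))) with hu
  have humem : ∀ m, u m ∈ Set.Icc (0:ℝ) t :=
    fun m => ⟨le_max_left _ _, max_le ht.le (min_le_left _ _)⟩
  have hut : ∃ m, u m = t := by
    obtain ⟨q, hq⟩ := exists_rat_gt t
    obtain ⟨m, hm⟩ := he q
    exact ⟨m, by rw [hu]; simp only [hm]; rw [min_eq_left hq.le, max_eq_right ht.le]⟩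
  set Em : ℕ → Set (ℝ → ℝ) := fun m => {b | ∃ j ≤ m, b (u j) ≤ c + 1} with hEm
  have hEmmeas : ∀ m, MeasurableSet (Em m) := by
    intro m
    have : Em m = ⋃ j, ⋃ _ : j ≤ m, {b : ℝ → ℝ | b (u j) ≤ c + 1} := by
      ext b; simp [hEm]
    rw [this]
    exact MeasurableSet.iUnion fun j => MeasurableSet.iUnion fun _ =>
      measurableSet_le (measurable_pi_apply _) measurable_const
  have hEmmono : Monotone Em := by
    intro m m' hmm' b hb
    obtain ⟨j, hj, hbj⟩ := hb
    exact ⟨j, le_trans hj hmm', hbj⟩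
  -- a.e. inclusion into the union
  have hle : {b : ℝ → ℝ | ∃ s ∈ Set.Icc (0:ℝ) t, b s ≤ c} ≤ᵐ[𝒲] ⋃ m, Em m := by
    filter_upwards [hae] with b hb
    intro hmem
    obtain ⟨s, hs, hbs⟩ := hmem
    obtain ⟨δ, hδ, hball⟩ := Metric.continuousAt_iff.1 (hb.1.continuousAt (x := s)) 1 one_pos
    rcases eq_or_lt_of_le hs.2 with heq | hlt
    · obtain ⟨m, hm⟩ := hut
      refine Set.mem_iUnion.2 ⟨m, ⟨m, le_rfl, ?_⟩⟩
      rw [hm, ← heq]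
      linarith
    · obtain ⟨q, hq1, hq2⟩ := exists_rat_btwn (lt_min hlt (lt_add_of_pos_right s hδ))
      obtain ⟨m, hm⟩ := he q
      have huq : u m = (q:ℝ) := by
        rw [hu]
        simp only [hm]
        rw [min_eq_right (le_of_lt (lt_of_lt_of_le hq2 (min_le_left _ _)))]
        exact max_eq_right (le_trans hs.1 hq1.le)
      have hdist : dist (u m) s < δ := by
        rw [huq, Real.dist_eq, abs_of_pos (by linarith [hq1])]
        have := lt_of_lt_of_le hq2 (min_le_right _ _)
        linarith
      have := hball hdist
      rw [Real.dist_eq] at this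
      have habs := abs_lt.1 this
      refine Set.mem_iUnion.2 ⟨m, ⟨m, le_rfl, ?_⟩⟩
      linarith [habs.1, habs.2]
  calc 𝒲 {b : ℝ → ℝ | ∃ s ∈ Set.Icc (0:ℝ) t, b s ≤ c}
      ≤ 𝒲 (⋃ m, Em m) := measure_mono_ae hle
    _ = ⨆ m, 𝒲 (Em m) := (hEmmono.directed_le).measure_iUnion
    _ ≤ 2 * gaussianReal 0 (Real.toNNReal t) (Set.Iic (c+1)) := by
        apply iSup_le
        intro m
        -- sorted times
        set Fm : Finset ℝ := insert 0 (insert t ((Finset.range (m+1)).image u)) with hFm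
        have hFmem : ∀ s ∈ Fm, 0 ≤ s ∧ s ≤ t := by
          intro s hs
          rcases Finset.mem_insert.1 hs with rfl | hs
          · exact ⟨le_rfl, ht.le⟩
          rcases Finset.mem_insert.1 hs with rfl | hs
          · exact ⟨ht.le, le_rfl⟩
          obtain ⟨j, _, rfl⟩ := Finset.mem_image.1 hs
          exact ⟨(humem j).1, (humem j).2⟩
        set l : List ℝ := Fm.sort (· ≤ ·) with hl
        have hsort : l.Pairwise (· ≤ ·) := Finset.pairwise_sort _ _
        have hlen : 0 < l.length := by
          rw [hl, Finset.length_sort]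
          exact Finset.card_pos.2 ⟨0, Finset.mem_insert_self _ _⟩
        set n : ℕ := l.length - 1 with hn
        have hlen' : l.length = n + 1 := by omega
        set σ : ℕ → ℝ := fun j => l.getD j t with hσ
        have hmem_l : ∀ s ∈ l, 0 ≤ s ∧ s ≤ t := fun s hs => hFmem s ((Finset.mem_sort _).1 hs)
        have hget_le : ∀ (i : Fin l.length), (l.get i) ≤ t :=
          fun i => (hmem_l _ (List.get_mem l i)).2
        have hget_ge : ∀ (i : Fin l.length), 0 ≤ l.get i :=
          fun i => (hmem_l _ (List.get_mem l i)).1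
        have hσmono : Monotone σ := by
          intro j j' hjj'
          show l.getD j t ≤ l.getD j' t
          by_cases hj' : j' < l.length
          · have hj : j < l.length := lt_of_le_of_lt hjj' hj'
            rw [List.getD_eq_getElem l t hj, List.getD_eq_getElem l t hj']
            exact List.Pairwise.rel_get_of_le hsort (show (⟨j, hj⟩ : Fin l.length) ≤ ⟨j', hj'⟩ from hjj')
          · push_neg at hj'
            rw [List.getD_eq_default l t hj']
            by_cases hj : j < l.length
            · rw [List.getD_eq_getElem l t hj]
              exact hget_le ⟨j, hj⟩
            · push_neg at hj
              rw [List.getD_eq_default l t hj]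
        have hmem_σ : ∀ s ∈ Fm, ∃ k ≤ n, σ k = s := by
          intro s hs
          have : s ∈ l := (Finset.mem_sort _).2 hs
          obtain ⟨i, hi⟩ := List.mem_iff_get.1 this
          refine ⟨i, by omega, ?_⟩
          show l.getD i t = s
          rw [List.getD_eq_getElem l t i.isLt]
          simpa using hi
        have hσ0 : σ 0 = 0 := by
          obtain ⟨k, hk, hσk⟩ := hmem_σ 0 (Finset.mem_insert_self _ _)
          have h1 : σ 0 ≤ σ k := hσmono (Nat.zero_le k)
          rw [hσk] at h1
          have h2 : 0 ≤ σ 0 := by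
            show 0 ≤ l.getD 0 t
            rw [List.getD_eq_getElem l t hlen]
            exact hget_ge ⟨0, hlen⟩
          linarith
        have hσn : σ n = t := by
          obtain ⟨k, hk, hσk⟩ := hmem_σ t (Finset.mem_insert_of_mem (Finset.mem_insert_self _ _))
          have h1 : σ k ≤ σ n := hσmono hk
          rw [hσk] at h1
          have h2 : σ n ≤ t := by
            show l.getD n t ≤ t
            rw [List.getD_eq_getElem l t (by omega : n < l.length)]
            exact hget_le ⟨n, by omega⟩
          linarith
        have hEsub : Em m ≤ᵐ[𝒲] {b : ℝ → ℝ | ∃ k ≤ n, b (σ k) - b (σ 0) ≤ c + 1} := by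
          filter_upwards [hae] with b hb
          intro hmem
          obtain ⟨j, hj, hbj⟩ := hmem
          have : u j ∈ Fm := by
            apply Finset.mem_insert_of_mem
            apply Finset.mem_insert_of_mem
            exact Finset.mem_image.2 ⟨j, Finset.mem_range.2 (by omega), rfl⟩
          obtain ⟨k, hk, hσk⟩ := hmem_σ (u j) this
          refine ⟨k, hk, ?_⟩
          rw [hσk, hσ0, hb.2]
          linarith
        calc 𝒲 (Em m) ≤ 𝒲 {b : ℝ → ℝ | ∃ k ≤ n, b (σ k) - b (σ 0) ≤ c + 1} :=
              measure_mono_ae hEsub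
          _ ≤ 2 * 𝒲 {b : ℝ → ℝ | b (σ n) - b (σ 0) ≤ c + 1} :=
              reflect 𝒲 ⟨hP, hae, hind, hmap⟩ n σ hσmono (by rw [hσ0]) (c+1)
          _ = 2 * gaussianReal 0 (Real.toNNReal t) (Set.Iic (c+1)) := by
              congr 1
              have : {b : ℝ → ℝ | b (σ n) - b (σ 0) ≤ c + 1}
                  = (fun b : ℝ → ℝ => b t - b 0) ⁻¹' (Set.Iic (c+1)) := by
                ext b
                simp [hσn, hσ0]
              rw [this, ← Measure.map_apply (f := fun b : ℝ → ℝ => b t - b 0)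
                ((measurable_pi_apply t).sub (measurable_pi_apply 0)) measurableSet_Iic,
                hmap 0 t le_rfl ht.le, sub_zero]

end Helpers

/-- Blow-up from supercritical mass: if g is bounded and int_0^{x0} g > 2 x0 for some x0 > 0,
then the McKean-Vlasov free-boundary equation admits no globally continuous solution. -/
theorem no_continuous_solution_of_mass (𝒲 : Measure (ℝ → ℝ)) (h𝒲 : IsStdBrownian 𝒲)
    (g : ℝ → ℝ) (hgm : Measurable g) (hg0 : ∀ x, 0 ≤ g x)
    (C : ℝ) (hgC : ∀ x, g x ≤ C)
    (x₀ : ℝ) (hx₀ : 0 < x₀) (hmass : 2 * x₀ < ∫ y in Set.Ioc (0:ℝ) x₀, g y) :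
    ¬ ∃ Λ : ℝ → ℝ, ContinuousOn Λ (Set.Ici 0) ∧ MonotoneOn Λ (Set.Ici 0) ∧ Λ 0 = 0 ∧
        ∀ t : ℝ, 0 ≤ t →
          Λ t = ∫ x in Set.Ioi (0:ℝ),
            (𝒲 {b | ∃ s ∈ Set.Icc 0 t, x + b s ≤ Λ s}).toReal * g x := by
  rintro ⟨Λ, hcont, hmonoΛ, hΛ0, hEq⟩
  obtain ⟨hP, hae, hind, hmap⟩ := h𝒲
  haveI := hP
  classical
  set G : ℝ := ∫ y in Set.Ioc (0:ℝ) x₀, g y with hGdef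
  have hGpos : 0 < G := lt_trans (by positivity) hmass
  have hC0 : 0 ≤ C := le_trans (hg0 0) (hgC 0)
  have hΛnn : ∀ t, 0 ≤ t → 0 ≤ Λ t := by
    intro t ht
    rw [← hΛ0]
    exact hmonoΛ (Set.mem_Ici.2 le_rfl) (Set.mem_Ici.2 ht) ht
  set S : ℝ → ℝ → Set (ℝ → ℝ) := fun t x => {b | ∃ s ∈ Set.Icc 0 t, x + b s ≤ Λ s} with hSdef
  set ρ : ℝ → ℝ → ℝ := fun t x => (𝒲 (S t x)).toReal with hρdef
  have hρ1 : ∀ t x, ρ t x ≤ 1 := by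
    intro t x
    rw [hρdef, ← ENNReal.toReal_one]
    exact ENNReal.toReal_mono ENNReal.one_ne_top prob_le_one
  have hρnn : ∀ t x, 0 ≤ ρ t x := fun t x => ENNReal.toReal_nonneg
  have hρanti : ∀ t, Antitone (ρ t) := by
    intro t x x' hxx'
    apply ENNReal.toReal_mono (measure_ne_top _ _)
    apply measure_mono
    rintro b ⟨s, hs, hle⟩
    exact ⟨s, hs, by linarith⟩
  have hlow : ∀ t, 0 < t → ∀ x : ℝ,
      gaussianReal 0 (Real.toNNReal t) (Set.Iic (Λ t - x)) ≤ 𝒲 (S t x) := by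
    intro t ht x
    have hmapt := hmap 0 t le_rfl ht.le
    rw [sub_zero] at hmapt
    have heq : gaussianReal 0 (Real.toNNReal t) (Set.Iic (Λ t - x))
        = 𝒲 ((fun b : ℝ → ℝ => b t - b 0) ⁻¹' Set.Iic (Λ t - x)) := by
      rw [← hmapt, Measure.map_apply (f := fun b : ℝ → ℝ => b t - b 0)
        ((measurable_pi_apply t).sub (measurable_pi_apply 0)) measurableSet_Iic]
    rw [heq]
    apply measure_mono_ae
    filter_upwards [hae] with b hb
    intro hmem
    have hmem' : b t - b 0 ≤ Λ t - x := hmem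
    rw [hb.2, sub_zero] at hmem'
    exact ⟨t, Set.mem_Icc.2 ⟨ht.le, le_rfl⟩, by linarith⟩
  have hup : ∀ t, 0 < t → ∀ x : ℝ,
      𝒲 (S t x) ≤ 2 * gaussianReal 0 (Real.toNNReal t) (Set.Iic (Λ t - x + 1)) := by
    intro t ht x
    have hsub : S t x ⊆ {b : ℝ → ℝ | ∃ s ∈ Set.Icc (0:ℝ) t, b s ≤ Λ t - x} := by
      rintro b ⟨s, hs, hle⟩
      have : Λ s ≤ Λ t := hmonoΛ (Set.mem_Ici.2 hs.1) (Set.mem_Ici.2 ht.le) hs.2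
      exact ⟨s, hs, by linarith⟩
    exact le_trans (measure_mono hsub) (upper_bound 𝒲 ⟨hP, hae, hind, hmap⟩ ht (Λ t - x))
  have hFmeas : ∀ t, Measurable (fun x => ρ t x * g x) :=
    fun t => ((hρanti t).measurable).mul hgm
  have hFnn : ∀ t x, 0 ≤ ρ t x * g x := fun t x => mul_nonneg (hρnn t x) (hg0 x)
  have hFint : ∀ t, 0 < t → IntegrableOn (fun x => ρ t x * g x) (Set.Ioi (0:ℝ)) := by
    intro t ht
    have hv : Real.toNNReal t ≠ 0 := by
      simp only [ne_eq, Real.toNNReal_eq_zero, not_le]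
      linarith
    have hvt : ((Real.toNNReal t : ℝ≥0) : ℝ) = t := Real.coe_toNNReal t ht.le
    set M : ℝ := max (Λ t + 2) 1 with hM
    have hM0 : (0:ℝ) ≤ M := le_trans zero_le_one (le_max_right _ _)
    have h1 : IntegrableOn (fun x => ρ t x * g x) (Set.Ioc 0 M) := by
      apply Integrable.mono' (g := fun _ => C) (integrableOn_const measure_Ioc_lt_top.ne)
        ((hFmeas t).aestronglyMeasurable)
      filter_upwards with x
      rw [Real.norm_eq_abs, abs_of_nonneg (hFnn t x)]
      calc ρ t x * g x ≤ 1 * C :=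
            mul_le_mul (hρ1 t x) (hgC x) (hg0 x) zero_le_one
        _ = C := one_mul C
    have h2 : IntegrableOn (fun x => ρ t x * g x) (Set.Ioi M) := by
      set K : ℝ := (2 * ((Real.sqrt (2*Real.pi*t))⁻¹ * (2*t)
        * Real.exp ((2*t)⁻¹ * (Λ t + 1)))) * C with hK
      apply Integrable.mono'
        (g := fun x => K * Real.exp (-(2*t)⁻¹ * x))
        (((exp_neg_integrableOn_Ioi M (show (0:ℝ) < (2*t)⁻¹ by positivity))).const_mul K)
        ((hFmeas t).aestronglyMeasurable)
      rw [ae_restrict_iff' measurableSet_Ioi]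
      filter_upwards with x hx
      have hxM : M < x := hx
      have hz : Λ t - x + 1 ≤ -1 := by
        have : Λ t + 2 ≤ M := le_max_left _ _
        linarith
      have hρle : ρ t x
          ≤ 2 * (gaussianReal 0 (Real.toNNReal t) (Set.Iic (Λ t - x + 1))).toReal := by
        rw [hρdef]
        have h3 := ENNReal.toReal_mono
          (ENNReal.mul_ne_top (by simp) (measure_ne_top _ _)) (hup t ht x)
        rwa [ENNReal.toReal_mul, ENNReal.toReal_ofNat] at h3
      have htail := gauss_tail hv (z := Λ t - x + 1) hz
      rw [hvt] at htail
      rw [Real.norm_eq_abs, abs_of_nonneg (hFnn t x)]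
      have hb1 : ρ t x * g x
          ≤ (2 * ((Real.sqrt (2*Real.pi*t))⁻¹ * (2*t)
              * Real.exp ((2*t)⁻¹ * (Λ t - x + 1)))) * C := by
        apply mul_le_mul _ (hgC x) (hg0 x) _
        · refine le_trans hρle ?_
          have h4 : (gaussianReal 0 (Real.toNNReal t) (Set.Iic (Λ t - x + 1))).toReal
              ≤ (Real.sqrt (2*Real.pi*t))⁻¹ * (2*t) * Real.exp ((2*t)⁻¹ * (Λ t - x + 1)) := by
            exact htail
          linarith
        · positivity
      refine le_trans hb1 ?_
      apply le_of_eq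
      rw [hK, show (2*t)⁻¹ * (Λ t - x + 1) = (2*t)⁻¹ * (Λ t + 1) + (-(2*t)⁻¹ * x) by ring,
        Real.exp_add]
      ring
    have := h1.union h2
    apply this.mono_set
    rw [Set.Ioc_union_Ioi_eq_Ioi hM0]
  have hkey : ∀ t, 0 < t → ∀ c : ℝ, x₀ - c ≤ Λ t →
      (gaussianReal 0 (Real.toNNReal t) (Set.Iic (-c))).toReal * G ≤ Λ t := by
    intro t ht c hc
    set q : ℝ := (gaussianReal 0 (Real.toNNReal t) (Set.Iic (-c))).toReal with hqdef
    have hgint : IntegrableOn g (Set.Ioc 0 x₀) := by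
      apply Integrable.mono' (g := fun _ => C) (integrableOn_const measure_Ioc_lt_top.ne)
        hgm.aestronglyMeasurable
      filter_upwards with x
      rw [Real.norm_eq_abs, abs_of_nonneg (hg0 x)]
      exact hgC x
    have hstep1 : ∫ x in Set.Ioc (0:ℝ) x₀, q * g x ≤ ∫ x in Set.Ioc (0:ℝ) x₀, ρ t x * g x := by
      apply setIntegral_mono_on (hgint.const_mul q)
        ((hFint t ht).mono_set Set.Ioc_subset_Ioi_self) measurableSet_Ioc
      intro x hx
      have hq' : q ≤ ρ t x := by
        rw [hqdef, hρdef]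
        apply ENNReal.toReal_mono (measure_ne_top _ _)
        refine le_trans (measure_mono (Set.Iic_subset_Iic.2 ?_)) (hlow t ht x)
        have := hx.2
        linarith
      exact mul_le_mul_of_nonneg_right hq' (hg0 x)
    have hstep2 : ∫ x in Set.Ioc (0:ℝ) x₀, ρ t x * g x ≤ ∫ x in Set.Ioi (0:ℝ), ρ t x * g x := by
      apply setIntegral_mono_set (hFint t ht)
        (Filter.Eventually.of_forall fun x => hFnn t x)
        (HasSubset.Subset.eventuallyLE Set.Ioc_subset_Ioi_self)
    have hintq : ∫ x in Set.Ioc (0:ℝ) x₀, q * g x = q * G := by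
      rw [hGdef, MeasureTheory.integral_const_mul]
    have hEqt : Λ t = ∫ x in Set.Ioi (0:ℝ), ρ t x * g x := hEq t ht.le
    linarith [hstep1, hstep2, hintq, hEqt]
  set r : ℝ := 1/2 - x₀ / G with hr
  have hrpos : 0 < r := by
    rw [hr]
    have h5 : x₀ / G < 1/2 := by
      rw [div_lt_iff₀ hGpos]
      linarith
    linarith
  set t₁ : ℝ := max 1 ((x₀ / r)^2) with ht₁
  have ht₁pos : 0 < t₁ := lt_of_lt_of_le one_pos (le_max_left _ _)
  have hv₁ : Real.toNNReal t₁ ≠ 0 := by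
    simp only [ne_eq, Real.toNNReal_eq_zero, not_le]
    linarith
  have hvt₁ : ((Real.toNNReal t₁ : ℝ≥0) : ℝ) = t₁ := Real.coe_toNNReal _ ht₁pos.le
  have hsqrt : x₀ * (Real.sqrt (2*Real.pi*t₁))⁻¹ < r := by
    have hπ : (1:ℝ) < 2*Real.pi := by nlinarith [Real.pi_gt_three]
    have h1 : (x₀/r)^2 < 2*Real.pi*t₁ := by
      have h2 : (x₀/r)^2 ≤ t₁ := le_max_right _ _
      nlinarith [sq_nonneg (x₀/r), ht₁pos]
    have h3 : x₀ / r < Real.sqrt (2*Real.pi*t₁) := (Real.lt_sqrt (by positivity)).2 h1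
    have hs0 : 0 < Real.sqrt (2*Real.pi*t₁) := Real.sqrt_pos.2 (by positivity)
    rw [← div_eq_mul_inv, div_lt_iff₀ hs0]
    have h6 := (div_lt_iff₀ hrpos).1 h3
    linarith [h6]
  have hq₁ := gauss_lb (Real.toNNReal t₁) hv₁ hx₀.le
  rw [hvt₁] at hq₁
  have hΛt₁ : x₀ < Λ t₁ := by
    have hk := hkey t₁ ht₁pos x₀ (by
      have := hΛnn t₁ ht₁pos.le
      linarith)
    have h6 : x₀ / G
        < (gaussianReal 0 (Real.toNNReal t₁) (Set.Iic (-x₀))).toReal := by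
      calc x₀ / G = 1/2 - r := by rw [hr]; ring
        _ < 1/2 - x₀ * (Real.sqrt (2*Real.pi*t₁))⁻¹ := by linarith
        _ ≤ _ := hq₁
    have h7 : x₀ < (gaussianReal 0 (Real.toNNReal t₁) (Set.Iic (-x₀))).toReal * G := by
      calc x₀ = (x₀ / G) * G := by field_simp
        _ < _ := mul_lt_mul_of_pos_right h6 hGpos
    linarith
  have hcont' : ContinuousOn Λ (Set.Icc 0 t₁) := hcont.mono (fun y hy => hy.1)
  have hIvt := intermediate_value_Icc ht₁pos.le hcont'
  have hx₀mem : x₀ ∈ Set.Icc (Λ 0) (Λ t₁) := by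
    rw [hΛ0]
    exact ⟨hx₀.le, hΛt₁.le⟩
  obtain ⟨ts, htsmem, hts⟩ := hIvt hx₀mem
  have htspos : 0 < ts := by
    rcases eq_or_lt_of_le htsmem.1 with h | h
    · exfalso
      rw [← h, hΛ0] at hts
      linarith
    · exact h
  have hk := hkey ts htspos 0 (by rw [hts]; linarith)
  rw [neg_zero] at hk
  have hhalfq := half_le_gauss_toReal (Real.toNNReal ts)
  have h8 : (1/2 : ℝ) * G ≤ (gaussianReal 0 (Real.toNNReal ts) (Set.Iic 0)).toReal * G :=
    mul_le_mul_of_nonneg_right hhalfq hGpos.le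
  rw [hts] at hk
  linarith
end

section
/- Suppose g is bounded and satisfies the physical jump condition: at any jump time t of a solution Λ to the McKean–Vlasov Stefan equation, ∫_{Λ_{t−}}^{Λ_{t−}+x} V(t−,y) dy ≥ x for all 0 ≤ x ≤ ΔΛ_t. Then every term of the jump sum in the Laplace transform identity is nonpositive: for each jump time t and each λ > 0, −∫_{Λ_{t−}}^{Λ_t} V(t−,x) e^{−λx} dx − (1/λ)(e^{−λΛ_t} − e^{−λΛ_{t−}}) ≤ 0. -/
open MeasureTheory Filter

private lemma exp_prim (l : ℝ) (c d : ℝ) :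
    (∫ s in c..d, l * Real.exp (-l * s)) = Real.exp (-l * c) - Real.exp (-l * d) := by
  have h : ∀ s : ℝ, HasDerivAt (fun x => -Real.exp (-l * x)) (l * Real.exp (-l * s)) s := by
    intro s
    have h1 : HasDerivAt (fun x : ℝ => -l * x) (-l) s := by
      simpa using (hasDerivAt_id s).const_mul (-l)
    have h2 := (Real.hasDerivAt_exp (-l * s)).comp s h1
    have h3 := h2.neg
    convert h3 using 1
    · rfl
    · rfl
    · funext x; simp [Function.comp]
    · ring
  have hcont : Continuous fun s : ℝ => l * Real.exp (-l * s) :=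
    continuous_const.mul (Real.continuous_exp.comp (continuous_const.mul continuous_id))
  rw [intervalIntegral.integral_eq_sub_of_hasDerivAt (fun s _ => h s)
    (hcont.intervalIntegrable c d)]
  ring

/-- Each jump term in the Laplace-transform identity is nonpositive under the physical jump
condition: if V >= 0 on [a,b] with int_a^{a+x} V >= x for all x in [0, b-a] and
int_a^b V = b - a, then for every l > 0,
-int_a^b V(x) e^{-l x} dx - (1/l)(e^{-l b} - e^{-l a}) <= 0. -/
theorem physical_jump_term_nonpos (a b l : ℝ) (hab : a ≤ b) (hl : 0 < l)
    (V : ℝ → ℝ) (hV0 : ∀ x ∈ Set.Icc a b, 0 ≤ V x)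
    (hVint : IntervalIntegrable V volume a b)
    (hphys : ∀ x ∈ Set.Icc 0 (b - a), x ≤ ∫ y in a..(a + x), V y)
    (htot : (∫ y in a..b, V y) = b - a) :
    -(∫ y in a..b, V y * Real.exp (-l * y)) -
        (1 / l) * (Real.exp (-l * b) - Real.exp (-l * a)) ≤ 0 := by
  set W : ℝ → ℝ := fun t => V t - 1 with hWdef
  have hW : IntervalIntegrable W volume a b := hVint.sub intervalIntegrable_const
  set G : ℝ → ℝ := fun s => ∫ t in a..s, W t with hGdef
  have hWsub : ∀ s ∈ Set.Icc a b, IntervalIntegrable W volume a s := fun s hs =>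
    hW.mono_set (Set.uIcc_subset_uIcc (Set.left_mem_uIcc)
      (by rw [Set.uIcc_of_le hab]; exact hs))
  have hVsub : ∀ s ∈ Set.Icc a b, IntervalIntegrable V volume a s := fun s hs =>
    hVint.mono_set (Set.uIcc_subset_uIcc (Set.left_mem_uIcc)
      (by rw [Set.uIcc_of_le hab]; exact hs))
  have hGeq : ∀ s ∈ Set.Icc a b, G s = (∫ t in a..s, V t) - (s - a) := by
    intro s hs
    simp only [hGdef, hWdef]
    rw [intervalIntegral.integral_sub (hVsub s hs) intervalIntegrable_const]
    simp
  have hG0 : ∀ s ∈ Set.Icc a b, 0 ≤ G s := by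
    intro s hs
    have hx : s - a ∈ Set.Icc 0 (b - a) := ⟨by linarith [hs.1], by linarith [hs.2]⟩
    have h := hphys (s - a) hx
    rw [show a + (s - a) = s by ring] at h
    rw [hGeq s hs]; linarith
  have hGb : G b = 0 := by
    rw [hGeq b ⟨hab, le_rfl⟩, htot]; ring
  -- Fubini on the triangle
  set μ : Measure ℝ := volume.restrict (Set.Ioc a b) with hμdef
  have hWint : Integrable W μ := hW.1
  have hWaesm : AEStronglyMeasurable W μ := hWint.aestronglyMeasurable
  set H : ℝ × ℝ → ℝ := fun p => if p.1 ≤ p.2 then W p.1 * (l * Real.exp (-l * p.2)) else 0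
    with hHdef
  have hHind : H = Set.indicator {p : ℝ × ℝ | p.1 ≤ p.2}
      (fun p => W p.1 * (l * Real.exp (-l * p.2))) := by
    ext p; by_cases h : p.1 ≤ p.2 <;> simp [hHdef, Set.indicator, h]
  have hcontexp : Continuous fun s : ℝ => l * Real.exp (-l * s) :=
    continuous_const.mul (Real.continuous_exp.comp (continuous_const.mul continuous_id))
  have hHaesm : AEStronglyMeasurable H (μ.prod μ) := by
    rw [hHind]
    exact (hWaesm.comp_fst.mul (hcontexp.aestronglyMeasurable.comp_snd)).indicator
      (measurableSet_le measurable_fst measurable_snd)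
  have hmajor : Integrable (fun p : ℝ × ℝ => ‖W p.1‖ * (l * Real.exp (-l * a))) (μ.prod μ) := by
    refine Integrable.mul_const ?_ _
    refine (integrable_prod_iff hWaesm.norm.comp_fst).2 ⟨?_, ?_⟩
    · exact Eventually.of_forall fun t =>
        (integrable_const ‖W t‖ : Integrable (fun _ : ℝ => ‖W t‖) μ)
    · simpa [integral_const, mul_comm] using hWint.norm.norm.mul_const (μ.real Set.univ)
  have hHint : Integrable H (μ.prod μ) := by
    refine hmajor.mono' hHaesm ?_
    have hmem : ∀ᵐ p ∂(μ.prod μ), p ∈ Set.Ioc a b ×ˢ Set.Ioc a b := by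
      rw [hμdef, Measure.prod_restrict]
      exact ae_restrict_mem (measurableSet_Ioc.prod measurableSet_Ioc)
    filter_upwards [hmem] with p hp
    have h2 : Real.exp (-l * p.2) ≤ Real.exp (-l * a) :=
      Real.exp_le_exp.2 (by nlinarith [hp.2.1])
    by_cases h : p.1 ≤ p.2
    · simp only [hHdef, if_pos h, Real.norm_eq_abs, abs_mul, abs_of_pos hl,
        abs_of_pos (Real.exp_pos _)]
      exact mul_le_mul_of_nonneg_left
        (mul_le_mul_of_nonneg_left h2 hl.le) (abs_nonneg _)
    · simp only [hHdef, if_neg h, norm_zero]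
      positivity
  have hswap := MeasureTheory.integral_integral_swap (f := fun t s => H (t, s)) hHint
  -- inner integral over s
  have hleft : (∫ t, (∫ s, H (t, s) ∂μ) ∂μ)
      = ∫ t in Set.Ioc a b, W t * (Real.exp (-l * t) - Real.exp (-l * b)) := by
    refine integral_congr_ae ?_
    filter_upwards [ae_restrict_mem measurableSet_Ioc] with t ht
    have hts : (fun s => H (t, s)) = Set.indicator (Set.Ici t)
        (fun s => W t * (l * Real.exp (-l * s))) := by
      ext s; by_cases h : t ≤ s <;> simp [hHdef, Set.indicator, h]
    have hset : Set.Ici t ∩ Set.Ioc a b = Set.Icc t b := by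
      ext s
      simp only [Set.mem_inter_iff, Set.mem_Ici, Set.mem_Ioc, Set.mem_Icc]
      exact ⟨fun ⟨h1, _, h3⟩ => ⟨h1, h3⟩, fun ⟨h1, h2⟩ => ⟨h1, ht.1.trans_le h1, h2⟩⟩
    rw [hts, hμdef, integral_indicator measurableSet_Ici,
      Measure.restrict_restrict measurableSet_Ici, hset,
      integral_Icc_eq_integral_Ioc, ← intervalIntegral.integral_of_le ht.2,
      intervalIntegral.integral_const_mul, exp_prim]
  -- inner integral over t
  have hright : (∫ s, (∫ t, H (t, s) ∂μ) ∂μ)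
      = ∫ s in Set.Ioc a b, (l * Real.exp (-l * s)) * G s := by
    refine integral_congr_ae ?_
    filter_upwards [ae_restrict_mem measurableSet_Ioc] with s hs
    have hts : (fun t => H (t, s)) = Set.indicator (Set.Iic s)
        (fun t => W t * (l * Real.exp (-l * s))) := by
      ext t; by_cases h : t ≤ s <;> simp [hHdef, Set.indicator, h]
    have hset : Set.Iic s ∩ Set.Ioc a b = Set.Ioc a s := by
      ext t
      simp only [Set.mem_inter_iff, Set.mem_Iic, Set.mem_Ioc]
      exact ⟨fun ⟨h1, h2, _⟩ => ⟨h2, h1⟩, fun ⟨h1, h2⟩ => ⟨h2, h1, h2.trans hs.2⟩⟩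
    rw [hts, hμdef, integral_indicator measurableSet_Iic,
      Measure.restrict_restrict measurableSet_Iic, hset,
      ← intervalIntegral.integral_of_le (hs.1.le.trans le_rfl)]
    rw [show (∫ t in a..s, W t * (l * Real.exp (-l * s)))
        = (∫ t in a..s, W t) * (l * Real.exp (-l * s)) from
      intervalIntegral.integral_mul_const _ _]
    ring
  -- nonnegativity of right side
  have hrpos : 0 ≤ ∫ s in Set.Ioc a b, (l * Real.exp (-l * s)) * G s := by
    refine setIntegral_nonneg measurableSet_Ioc fun s hs => ?_
    have hGs := hG0 s ⟨hs.1.le, hs.2⟩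
    have he := Real.exp_pos (-l * s)
    exact mul_nonneg (by positivity) hGs
  -- conclude the key inequality
  have hce : Continuous fun t : ℝ => Real.exp (-l * t) := by fun_prop
  have hWexp : IntervalIntegrable (fun t => W t * Real.exp (-l * t)) volume a b :=
    hW.mul_continuousOn hce.continuousOn
  have hVexp : IntervalIntegrable (fun t => V t * Real.exp (-l * t)) volume a b :=
    hVint.mul_continuousOn hce.continuousOn
  have hkey : 0 ≤ ∫ t in a..b, W t * Real.exp (-l * t) := by
    have hexpand : (∫ t in Set.Ioc a b, W t * (Real.exp (-l * t) - Real.exp (-l * b)))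
        = (∫ t in a..b, W t * Real.exp (-l * t)) - Real.exp (-l * b) * G b := by
      rw [← intervalIntegral.integral_of_le hab]
      have : (fun t => W t * (Real.exp (-l * t) - Real.exp (-l * b)))
          = fun t => W t * Real.exp (-l * t) - Real.exp (-l * b) * W t := by
        ext t; ring
      rw [this, intervalIntegral.integral_sub hWexp (hW.const_mul _),
        intervalIntegral.integral_const_mul]
    have h0 : (∫ t in Set.Ioc a b, W t * (Real.exp (-l * t) - Real.exp (-l * b)))
        = ∫ s in Set.Ioc a b, (l * Real.exp (-l * s)) * G s := by
      rw [← hleft, ← hright, hswap]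
    rw [hexpand, hGb] at h0
    simp only [mul_zero, sub_zero] at h0
    rw [h0]; exact hrpos
  -- unfold W
  have hsplit : (∫ t in a..b, W t * Real.exp (-l * t))
      = (∫ t in a..b, V t * Real.exp (-l * t)) - ∫ t in a..b, Real.exp (-l * t) := by
    have : (fun t => W t * Real.exp (-l * t))
        = fun t => V t * Real.exp (-l * t) - Real.exp (-l * t) := by
      ext t; simp [hWdef]; ring
    rw [this, intervalIntegral.integral_sub hVexp (hce.intervalIntegrable a b)]
  have hexpint : (∫ t in a..b, Real.exp (-l * t))
      = (1 / l) * (Real.exp (-l * a) - Real.exp (-l * b)) := by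
    have h := exp_prim l a b
    rw [intervalIntegral.integral_const_mul] at h
    rw [← h, one_div, inv_mul_cancel_left₀ hl.ne']
  rw [hsplit, hexpint] at hkey
  linarith
end

section
/- Suppose g is measurable, bounded, satisfies the physical jump condition, 1 − g ∈ L¹([0,∞)), and a global solution Λ of the McKean–Vlasov Stefan equation exists with finitely many jumps before some time τ*, after which the restarted density is continuous and strictly less than 1. Then, writing 2/K = ∫_0^∞ (1 − g(x)) dx, the Laplace transforms satisfy |∫_0^∞ (1−g(x)) e^{−λx} dx − ∫_{Λ_{τ*}}^∞ (1 − V(τ*,x)) e^{−λx − λ²τ*/2} dx| ≤ λτ*/2 + C λ Λ_{τ*}², and in particular ∫_0^∞ (1 − Ṽ(τ*,x)) dx = ∫_0^∞ (1 − g(x)) dx = 2/K, where Ṽ(τ*,x) = V(τ*, x + Λ_{τ*}). -/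
open MeasureTheory Filter Set Topology

lemma lhc_exp_ineq {u : ℝ} (hu : 0 ≤ u) :
    u * Real.exp (-u) ≤ 1 - Real.exp (-u) ∧ 1 - Real.exp (-u) ≤ u := by
  have h1 := Real.add_one_le_exp (-u)
  have h2 := Real.add_one_le_exp u
  have h3 : 0 < Real.exp (-u) := Real.exp_pos _
  have h4 : Real.exp u * Real.exp (-u) = 1 := by rw [← Real.exp_add]; simp
  constructor
  · nlinarith
  · linarith

lemma lhc_jump_bound (v : ℝ → ℝ) (C l a b : ℝ) (hl : 0 < l) (ha : 0 ≤ a) (hab : a ≤ b)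
    (hC : 0 < C) (hv : ∀ x, 0 ≤ v x ∧ v x ≤ C)
    (htot : (∫ y in a..b, v y) = b - a) :
    |(-(∫ y in a..b, v y * Real.exp (-l * y)) -
        (1 / l) * (Real.exp (-l * b) - Real.exp (-l * a)))|
      ≤ C * l * (b - a) ^ 2 := by
  rcases eq_or_lt_of_le hab with heq | hlt
  · subst heq
    simp
  · have hD : 0 < b - a := by linarith
    have hInt : IntervalIntegrable v volume a b := by
      by_contra h
      rw [intervalIntegral.integral_undef h] at htot
      linarith
    have hC1 : 1 ≤ C := by
      have hmono : (∫ y in a..b, v y) ≤ ∫ y in a..b, (C : ℝ) :=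
        intervalIntegral.integral_mono_on hab hInt intervalIntegrable_const
          (fun x _ => (hv x).2)
      rw [htot, intervalIntegral.integral_const, smul_eq_mul] at hmono
      nlinarith
    have hIntE : IntervalIntegrable (fun y => v y * Real.exp (-l * y)) volume a b :=
      hInt.mul_continuousOn (Continuous.continuousOn (by continuity))
    set A := ∫ y in a..b, v y * Real.exp (-l * y) with hA
    have hAle : A ≤ Real.exp (-l * a) * (b - a) := by
      have h1 : A ≤ ∫ y in a..b, v y * Real.exp (-l * a) := by
        refine intervalIntegral.integral_mono_on hab hIntE (hInt.mul_const _) ?_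
        intro x hx
        exact mul_le_mul_of_nonneg_left
          (Real.exp_le_exp.2 (by nlinarith [hx.1])) (hv x).1
      rwa [intervalIntegral.integral_mul_const, htot, mul_comm] at h1
    have hAge : Real.exp (-l * b) * (b - a) ≤ A := by
      have h1 : (∫ y in a..b, v y * Real.exp (-l * b)) ≤ A := by
        refine intervalIntegral.integral_mono_on hab (hInt.mul_const _) hIntE ?_
        intro x hx
        exact mul_le_mul_of_nonneg_left
          (Real.exp_le_exp.2 (by nlinarith [hx.2])) (hv x).1
      rwa [intervalIntegral.integral_mul_const, htot, mul_comm] at h1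
    have hu : 0 ≤ l * (b - a) := by positivity
    obtain ⟨he1, he2⟩ := lhc_exp_ineq hu
    have hexp : Real.exp (-l * b) = Real.exp (-l * a) * Real.exp (-(l * (b - a))) := by
      rw [← Real.exp_add]; ring_nf
    have hea1 : Real.exp (-l * a) ≤ 1 := Real.exp_le_one_iff.2 (by nlinarith)
    have hea0 : 0 < Real.exp (-l * a) := Real.exp_pos _
    have hEup : Real.exp (-l * a) - Real.exp (-l * b) ≤ l * (b - a) * Real.exp (-l * a) := by
      rw [hexp]; nlinarith
    have hEdn : l * (b - a) * Real.exp (-l * b) ≤ Real.exp (-l * a) - Real.exp (-l * b) := by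
      rw [hexp]; nlinarith
    have hlinv : (0:ℝ) < 1 / l := by positivity
    have hEup' : (1 / l) * (Real.exp (-l * a) - Real.exp (-l * b)) ≤ (b - a) * Real.exp (-l * a) := by
      have h := mul_le_mul_of_nonneg_left hEup hlinv.le
      have : (1 / l) * (l * (b - a) * Real.exp (-l * a)) = (b - a) * Real.exp (-l * a) := by
        field_simp
      linarith
    have hEdn' : (b - a) * Real.exp (-l * b) ≤ (1 / l) * (Real.exp (-l * a) - Real.exp (-l * b)) := by
      have h := mul_le_mul_of_nonneg_left hEdn hlinv.le
      have : (1 / l) * (l * (b - a) * Real.exp (-l * b)) = (b - a) * Real.exp (-l * b) := by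
        field_simp
      linarith
    have k1 : (b - a) * (Real.exp (-l * a) - Real.exp (-l * b)) ≤
        l * (b - a) ^ 2 * Real.exp (-l * a) := by
      nlinarith [mul_le_mul_of_nonneg_left hEup hD.le]
    have k2 : l * (b - a) ^ 2 * Real.exp (-l * a) ≤ l * (b - a) ^ 2 := by
      nlinarith [mul_nonneg (mul_nonneg hl.le (sq_nonneg (b - a))) (sub_nonneg.2 hea1)]
    have k3 : l * (b - a) ^ 2 ≤ C * (l * (b - a) ^ 2) := by
      nlinarith [mul_nonneg (mul_nonneg hl.le (sq_nonneg (b - a))) (sub_nonneg.2 hC1)]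
    have hrw : -A - (1 / l) * (Real.exp (-l * b) - Real.exp (-l * a)) =
        (1 / l) * (Real.exp (-l * a) - Real.exp (-l * b)) - A := by ring
    rw [hrw, abs_le]
    constructor
    · linarith [hEdn', hAle, k1, k2, k3]
    · linarith [hEup', hAge, k1, k2, k3]

lemma lhc_sum_len (J : Finset ℝ) (a b : ℝ → ℝ) :
    ∀ M : ℝ, 0 ≤ M → (∀ s ∈ J, 0 ≤ a s ∧ a s ≤ b s ∧ b s ≤ M) →
      (∀ s ∈ J, ∀ t ∈ J, s < t → b s ≤ a t) →
      ∑ s ∈ J, (b s - a s) ≤ M := by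
  induction J using Finset.induction_on_max with
  | empty => intro M hM _ _; simpa
  | insert m s hms ih =>
    intro M hM h1 h2
    have hmem : m ∉ s := fun h => lt_irrefl m (hms m h)
    rw [Finset.sum_insert hmem]
    have hm := h1 m (Finset.mem_insert_self m s)
    have hih : ∑ x ∈ s, (b x - a x) ≤ a m := by
      refine ih (a m) hm.1 ?_ ?_
      · intro x hx
        exact ⟨(h1 x (Finset.mem_insert_of_mem hx)).1,
          (h1 x (Finset.mem_insert_of_mem hx)).2.1,
          h2 x (Finset.mem_insert_of_mem hx) m (Finset.mem_insert_self m s) (hms x hx)⟩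
      · intro x hx t ht hlt
        exact h2 x (Finset.mem_insert_of_mem hx) t (Finset.mem_insert_of_mem ht) hlt
    linarith [hm.2.1, hm.2.2]
/-- Conservation of latent heat across finitely many physical jumps: if 1 - g is integrable
with int (1-g) = 2/K, the free boundary Lambda has finitely many jumps (times J) before
tau*, all physical, the surviving density V at tau* lies in [0,1] beyond Lambda_{tau*}, the
left-limit densities Vm are bounded by C, and the Laplace-transform identity holds, then
|int_0^inf (1-g) e^{-l x} dx - int_{Lambda_{tau*}}^inf (1-V) e^{-l x - l^2 tau*/2} dx|
  <= l tau*/2 + C l Lambda_{tau*}^2 for every l > 0, and consequently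
int_0^inf (1 - V(tau*, x + Lambda_{tau*})) dx = int_0^inf (1 - g) dx = 2/K. -/
theorem latent_heat_conservation
    (g : ℝ → ℝ) (hgm : Measurable g) (hg0 : ∀ x, 0 ≤ g x)
    (C : ℝ) (hC : 0 < C) (hgC : ∀ x, g x ≤ C)
    (hL1 : IntegrableOn (fun x => 1 - g x) (Set.Ioi 0))
    (K : ℝ) (hK : 0 < K) (hmass : (∫ x in Set.Ioi (0:ℝ), (1 - g x)) = 2 / K)
    (τs : ℝ) (hτs : 0 < τs)
    (Λ : ℝ → ℝ) (hΛmono : MonotoneOn Λ (Set.Icc 0 τs)) (hΛ0 : 0 ≤ Λ 0)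
    (V : ℝ → ℝ) (hV01 : ∀ x, Λ τs ≤ x → 0 ≤ V x ∧ V x ≤ 1)
    (hVL1 : IntegrableOn (fun x => 1 - V x) (Set.Ioi (Λ τs)))
    (J : Finset ℝ) (hJsub : ∀ s ∈ J, s ∈ Set.Icc 0 τs ∧
      0 ≤ Function.leftLim Λ s ∧ Function.leftLim Λ s ≤ Λ s ∧ Λ s ≤ Λ τs)
    (Vm : ℝ → ℝ → ℝ) (hVm : ∀ s ∈ J, ∀ x, 0 ≤ Vm s x ∧ Vm s x ≤ C)
    (hphys : ∀ s ∈ J, ∀ x ∈ Set.Icc 0 (Λ s - Function.leftLim Λ s),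
      x ≤ ∫ y in (Function.leftLim Λ s)..(Function.leftLim Λ s + x), Vm s y)
    (htotjump : ∀ s ∈ J,
      (∫ y in (Function.leftLim Λ s)..(Λ s), Vm s y) = Λ s - Function.leftLim Λ s)
    (hLap : ∀ l : ℝ, 0 < l →
      (∫ x in Set.Ioi (0:ℝ), (1 - g x) * Real.exp (-l * x)) -
        (∫ x in Set.Ioi (Λ τs), (1 - V x) * Real.exp (-l * x - l ^ 2 * τs / 2))
      = (l / 2) *
          (∫ s in (0:ℝ)..τs, Real.exp (-l * Function.leftLim Λ s - l ^ 2 * s / 2)) +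
        ∑ s ∈ J, Real.exp (-l ^ 2 * s / 2) *
          (-(∫ y in (Function.leftLim Λ s)..(Λ s), Vm s y * Real.exp (-l * y)) -
            (1 / l) * (Real.exp (-l * Λ s) - Real.exp (-l * Function.leftLim Λ s)))) :
    (∀ l : ℝ, 0 < l →
      |(∫ x in Set.Ioi (0:ℝ), (1 - g x) * Real.exp (-l * x)) -
          (∫ x in Set.Ioi (Λ τs), (1 - V x) * Real.exp (-l * x - l ^ 2 * τs / 2))|
        ≤ l * τs / 2 + C * l * (Λ τs) ^ 2) ∧
    (∫ x in Set.Ioi (0:ℝ), (1 - V (x + Λ τs))) = (∫ x in Set.Ioi (0:ℝ), (1 - g x)) ∧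
    (∫ x in Set.Ioi (0:ℝ), (1 - V (x + Λ τs))) = 2 / K := by
  have hτsmem : τs ∈ Set.Icc (0:ℝ) τs := ⟨hτs.le, le_rfl⟩
  have h0mem : (0:ℝ) ∈ Set.Icc (0:ℝ) τs := ⟨le_rfl, hτs.le⟩
  have hΛτs0 : 0 ≤ Λ τs := hΛ0.trans (hΛmono h0mem hτsmem hτs.le)
  -- left limits behave well on (0, τs]
  have htend : ∀ s : ℝ, 0 < s → s ≤ τs →
      Tendsto Λ (𝓝[<] s) (𝓝 (Function.leftLim Λ s)) := by
    intro s hs hsτ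
    have hmono' : MonotoneOn Λ (Set.Ioo 0 s) :=
      hΛmono.mono (fun x hx => ⟨hx.1.le, hx.2.le.trans hsτ⟩)
    have hne : (Set.Ioo (0:ℝ) s).Nonempty := ⟨s / 2, by constructor <;> linarith⟩
    have hbdd : BddAbove (Λ '' Set.Ioo 0 s) := by
      refine ⟨Λ τs, ?_⟩
      rintro _ ⟨x, hx, rfl⟩
      exact hΛmono ⟨hx.1.le, hx.2.le.trans hsτ⟩ hτsmem (hx.2.le.trans hsτ)
    have htd := MonotoneOn.tendsto_nhdsWithin_Ioo_left hne hmono' hbdd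
    have hne' : 𝓝[<] s ≠ ⊥ := (nhdsLT_neBot s).ne'
    rw [leftLim_eq_of_tendsto htd]
    exact htd
  have hllnn : ∀ s : ℝ, 0 < s → s ≤ τs → 0 ≤ Function.leftLim Λ s := by
    intro s hs hsτ
    refine ge_of_tendsto (htend s hs hsτ) ?_
    filter_upwards [Ioo_mem_nhdsLT hs] with x hx
    exact hΛ0.trans (hΛmono h0mem ⟨hx.1.le, hx.2.le.trans hsτ⟩ hx.1.le)
  have hord : ∀ s ∈ J, ∀ t ∈ J, s < t → Λ s ≤ Function.leftLim Λ t := by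
    intro s hs t ht hst
    have hsI := (hJsub s hs).1
    have htI := (hJsub t ht).1
    refine ge_of_tendsto (htend t (lt_of_le_of_lt hsI.1 hst) htI.2) ?_
    filter_upwards [Ioo_mem_nhdsLT hst] with x hx
    exact hΛmono hsI ⟨hsI.1.trans hx.1.le, hx.2.le.trans htI.2⟩ hx.1.le
  -- sum of jump lengths is at most Λ τs
  have hsumD : ∑ s ∈ J, (Λ s - Function.leftLim Λ s) ≤ Λ τs := by
    refine lhc_sum_len J (fun s => Function.leftLim Λ s) Λ (Λ τs) hΛτs0 ?_ hord
    intro s hs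
    exact ⟨(hJsub s hs).2.1, (hJsub s hs).2.2.1, (hJsub s hs).2.2.2⟩
  have hDnn : ∀ s ∈ J, 0 ≤ Λ s - Function.leftLim Λ s := by
    intro s hs; linarith [(hJsub s hs).2.2.1]
  have hsumDsq : ∑ s ∈ J, (Λ s - Function.leftLim Λ s) ^ 2 ≤ (Λ τs) ^ 2 := by
    have h1 : ∑ s ∈ J, (Λ s - Function.leftLim Λ s) ^ 2 ≤
        (∑ s ∈ J, (Λ s - Function.leftLim Λ s)) ^ 2 := by
      calc ∑ s ∈ J, (Λ s - Function.leftLim Λ s) ^ 2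
          ≤ ∑ s ∈ J, (Λ s - Function.leftLim Λ s) *
              (∑ t ∈ J, (Λ t - Function.leftLim Λ t)) := by
            refine Finset.sum_le_sum (fun s hs => ?_)
            rw [sq]
            exact mul_le_mul_of_nonneg_left (Finset.single_le_sum hDnn hs) (hDnn s hs)
        _ = (∑ s ∈ J, (Λ s - Function.leftLim Λ s)) ^ 2 := by
            rw [← Finset.sum_mul, sq]
    have h2 : (∑ s ∈ J, (Λ s - Function.leftLim Λ s)) ^ 2 ≤ (Λ τs) ^ 2 :=
      pow_le_pow_left₀ (Finset.sum_nonneg hDnn) hsumD 2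
    linarith
  -- Part 1
  have part1 : ∀ l : ℝ, 0 < l →
      |(∫ x in Set.Ioi (0:ℝ), (1 - g x) * Real.exp (-l * x)) -
          (∫ x in Set.Ioi (Λ τs), (1 - V x) * Real.exp (-l * x - l ^ 2 * τs / 2))|
        ≤ l * τs / 2 + C * l * (Λ τs) ^ 2 := by
    intro l hl
    rw [hLap l hl]
    have hcont : |(l / 2) *
        (∫ s in (0:ℝ)..τs, Real.exp (-l * Function.leftLim Λ s - l ^ 2 * s / 2))|
        ≤ l * τs / 2 := by
      have hI : ‖∫ s in (0:ℝ)..τs,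
          Real.exp (-l * Function.leftLim Λ s - l ^ 2 * s / 2)‖ ≤ 1 * |τs - 0| := by
        refine intervalIntegral.norm_integral_le_of_norm_le_const ?_
        intro x hx
        rw [Set.uIoc_of_le hτs.le] at hx
        rw [Real.norm_eq_abs, Real.abs_exp]
        refine Real.exp_le_one_iff.2 ?_
        have h1 : 0 ≤ Function.leftLim Λ x := hllnn x hx.1 hx.2
        nlinarith [hx.1, sq_nonneg l]
      rw [Real.norm_eq_abs] at hI
      rw [abs_mul]
      have : |l / 2| = l / 2 := abs_of_pos (by positivity)
      rw [this]
      rw [sub_zero, abs_of_pos hτs] at hI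
      calc l / 2 * |∫ s in (0:ℝ)..τs, Real.exp (-l * Function.leftLim Λ s - l ^ 2 * s / 2)|
          ≤ l / 2 * (1 * τs) := by
            refine mul_le_mul_of_nonneg_left ?_ (by positivity)
            simpa using hI
        _ = l * τs / 2 := by ring
    have hsum : |∑ s ∈ J, Real.exp (-l ^ 2 * s / 2) *
        (-(∫ y in (Function.leftLim Λ s)..(Λ s), Vm s y * Real.exp (-l * y)) -
          (1 / l) * (Real.exp (-l * Λ s) - Real.exp (-l * Function.leftLim Λ s)))|
        ≤ C * l * (Λ τs) ^ 2 := by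
      have hterm : ∀ s ∈ J, |Real.exp (-l ^ 2 * s / 2) *
          (-(∫ y in (Function.leftLim Λ s)..(Λ s), Vm s y * Real.exp (-l * y)) -
            (1 / l) * (Real.exp (-l * Λ s) - Real.exp (-l * Function.leftLim Λ s)))|
          ≤ C * l * (Λ s - Function.leftLim Λ s) ^ 2 := by
        intro s hs
        have hjb := lhc_jump_bound (Vm s) C l (Function.leftLim Λ s) (Λ s) hl
          (hJsub s hs).2.1 (hJsub s hs).2.2.1 hC (hVm s hs) (htotjump s hs)
        rw [abs_mul, Real.abs_exp]
        have hsnn : (0:ℝ) ≤ s := (hJsub s hs).1.1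
        have hexp1 : Real.exp (-l ^ 2 * s / 2) ≤ 1 :=
          Real.exp_le_one_iff.2 (by nlinarith [sq_nonneg l])
        calc Real.exp (-l ^ 2 * s / 2) *
            |(-(∫ y in (Function.leftLim Λ s)..(Λ s), Vm s y * Real.exp (-l * y)) -
              (1 / l) * (Real.exp (-l * Λ s) - Real.exp (-l * Function.leftLim Λ s)))|
            ≤ 1 * |(-(∫ y in (Function.leftLim Λ s)..(Λ s), Vm s y * Real.exp (-l * y)) -
              (1 / l) * (Real.exp (-l * Λ s) - Real.exp (-l * Function.leftLim Λ s)))| :=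
            mul_le_mul_of_nonneg_right hexp1 (abs_nonneg _)
          _ ≤ C * l * (Λ s - Function.leftLim Λ s) ^ 2 := by simpa using hjb
      calc |∑ s ∈ J, Real.exp (-l ^ 2 * s / 2) *
          (-(∫ y in (Function.leftLim Λ s)..(Λ s), Vm s y * Real.exp (-l * y)) -
            (1 / l) * (Real.exp (-l * Λ s) - Real.exp (-l * Function.leftLim Λ s)))|
          ≤ ∑ s ∈ J, |Real.exp (-l ^ 2 * s / 2) *
          (-(∫ y in (Function.leftLim Λ s)..(Λ s), Vm s y * Real.exp (-l * y)) -
            (1 / l) * (Real.exp (-l * Λ s) - Real.exp (-l * Function.leftLim Λ s)))| :=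
          Finset.abs_sum_le_sum_abs _ _
        _ ≤ ∑ s ∈ J, C * l * (Λ s - Function.leftLim Λ s) ^ 2 :=
          Finset.sum_le_sum hterm
        _ = C * l * ∑ s ∈ J, (Λ s - Function.leftLim Λ s) ^ 2 := by
          rw [Finset.mul_sum]
        _ ≤ C * l * (Λ τs) ^ 2 :=
          mul_le_mul_of_nonneg_left hsumDsq (by positivity)
    calc |(l / 2) *
        (∫ s in (0:ℝ)..τs, Real.exp (-l * Function.leftLim Λ s - l ^ 2 * s / 2)) +
        ∑ s ∈ J, Real.exp (-l ^ 2 * s / 2) *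
          (-(∫ y in (Function.leftLim Λ s)..(Λ s), Vm s y * Real.exp (-l * y)) -
            (1 / l) * (Real.exp (-l * Λ s) - Real.exp (-l * Function.leftLim Λ s)))|
        ≤ |(l / 2) *
        (∫ s in (0:ℝ)..τs, Real.exp (-l * Function.leftLim Λ s - l ^ 2 * s / 2))| +
        |∑ s ∈ J, Real.exp (-l ^ 2 * s / 2) *
          (-(∫ y in (Function.leftLim Λ s)..(Λ s), Vm s y * Real.exp (-l * y)) -
            (1 / l) * (Real.exp (-l * Λ s) - Real.exp (-l * Function.leftLim Λ s)))| :=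
        abs_add_le _ _
      _ ≤ l * τs / 2 + C * l * (Λ τs) ^ 2 := add_le_add hcont hsum
  have key : (∫ x in Set.Ioi (0:ℝ), (1 - V (x + Λ τs))) =
      (∫ x in Set.Ioi (0:ℝ), (1 - g x)) := by
    -- translation plus limit l → 0
    have htrans : (∫ x in Set.Ioi (0:ℝ), (1 - V (x + Λ τs))) =
        ∫ x in Set.Ioi (Λ τs), (1 - V x) := by
      have hmp : MeasurePreserving (fun x : ℝ => x + Λ τs) volume volume :=
        measurePreserving_add_right volume (Λ τs)
      have hemb : MeasurableEmbedding (fun x : ℝ => x + Λ τs) :=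
        (MeasurableEquiv.addRight (Λ τs)).measurableEmbedding
      have hpre : (fun x : ℝ => x + Λ τs) ⁻¹' Set.Ioi (Λ τs) = Set.Ioi 0 := by
        ext x; simp [Set.mem_preimage, Set.mem_Ioi]
      rw [← hpre]
      exact hmp.setIntegral_preimage_emb hemb (fun y => 1 - V y) (Set.Ioi (Λ τs))
    rw [htrans]
    -- dominated convergence along l_n = 1/(n+1)
    set l : ℕ → ℝ := fun n => 1 / ((n : ℝ) + 1) with hldef
    have hlpos : ∀ n, 0 < l n := fun n => by positivity
    have hl0 : Tendsto l atTop (𝓝 0) := tendsto_one_div_add_atTop_nhds_zero_nat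
    have hA : Tendsto (fun n => ∫ x in Set.Ioi (0:ℝ), (1 - g x) * Real.exp (-(l n) * x))
        atTop (𝓝 (∫ x in Set.Ioi (0:ℝ), (1 - g x))) := by
      refine tendsto_integral_of_dominated_convergence (fun x => |1 - g x|)
        (fun n => ?_) hL1.abs (fun n => ?_) ?_
      · exact ((measurable_const.sub hgm).mul
          (by fun_prop : Measurable fun x => Real.exp (-(l n) * x))).aestronglyMeasurable
      · rw [ae_restrict_iff' measurableSet_Ioi]
        refine ae_of_all _ (fun x hx => ?_)
        rw [Real.norm_eq_abs, abs_mul, Real.abs_exp]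
        have : Real.exp (-(l n) * x) ≤ 1 :=
          Real.exp_le_one_iff.2 (by nlinarith [(hlpos n).le, le_of_lt (Set.mem_Ioi.1 hx)])
        exact mul_le_of_le_one_right (abs_nonneg _) this
      · refine ae_of_all _ (fun x => ?_)
        have h1 : Tendsto (fun n => -(l n) * x) atTop (𝓝 0) := by
          have := (hl0.neg).mul_const x
          simpa using this
        have h2 : Tendsto (fun n => Real.exp (-(l n) * x)) atTop (𝓝 1) := by
          have := (Real.continuous_exp.tendsto 0).comp h1
          simpa [Function.comp_def] using this
        have := (tendsto_const_nhds (x := (1 - g x))).mul h2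
        simpa using this
    have hB : Tendsto (fun n => ∫ x in Set.Ioi (Λ τs),
        (1 - V x) * Real.exp (-(l n) * x - (l n) ^ 2 * τs / 2))
        atTop (𝓝 (∫ x in Set.Ioi (Λ τs), (1 - V x))) := by
      refine tendsto_integral_of_dominated_convergence (fun x => |1 - V x|)
        (fun n => ?_) hVL1.abs (fun n => ?_) ?_
      · exact hVL1.aestronglyMeasurable.mul
          (by fun_prop : Measurable fun x =>
            Real.exp (-(l n) * x - (l n) ^ 2 * τs / 2)).aestronglyMeasurable
      · rw [ae_restrict_iff' measurableSet_Ioi]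
        refine ae_of_all _ (fun x hx => ?_)
        rw [Real.norm_eq_abs, abs_mul, Real.abs_exp]
        have hx0 : (0:ℝ) ≤ x := hΛτs0.trans (le_of_lt hx)
        have : Real.exp (-(l n) * x - (l n) ^ 2 * τs / 2) ≤ 1 := by
          refine Real.exp_le_one_iff.2 ?_
          nlinarith [(hlpos n).le, sq_nonneg (l n), hτs.le]
        exact mul_le_of_le_one_right (abs_nonneg _) this
      · refine ae_of_all _ (fun x => ?_)
        have h1 : Tendsto (fun n => -(l n) * x - (l n) ^ 2 * τs / 2) atTop (𝓝 0) := by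
          have ha := (hl0.neg).mul_const x
          have hb := (((hl0.pow 2)).mul_const τs).div_const 2
          have := ha.sub hb
          simpa using this
        have h2 : Tendsto (fun n => Real.exp (-(l n) * x - (l n) ^ 2 * τs / 2))
            atTop (𝓝 1) := by
          have := (Real.continuous_exp.tendsto 0).comp h1
          simpa [Function.comp_def] using this
        have := (tendsto_const_nhds (x := (1 - V x))).mul h2
        simpa using this
    have hdiff := (hA.sub hB).abs
    have hbd : Tendsto (fun n => l n * τs / 2 + C * l n * (Λ τs) ^ 2) atTop (𝓝 0) := by
      have h1 := (hl0.mul_const τs).div_const 2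
      have h2 := ((tendsto_const_nhds (x := C)).mul hl0).mul_const ((Λ τs) ^ 2)
      convert h1.add h2 using 2
      ring
    have hle : |(∫ x in Set.Ioi (0:ℝ), (1 - g x)) -
        (∫ x in Set.Ioi (Λ τs), (1 - V x))| ≤ 0 := by
      refine le_of_tendsto_of_tendsto' hdiff hbd (fun n => part1 (l n) (hlpos n))
    have := abs_nonneg ((∫ x in Set.Ioi (0:ℝ), (1 - g x)) -
        (∫ x in Set.Ioi (Λ τs), (1 - V x)))
    have heq : (∫ x in Set.Ioi (0:ℝ), (1 - g x)) =
        ∫ x in Set.Ioi (Λ τs), (1 - V x) := by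
      have h0 : |(∫ x in Set.Ioi (0:ℝ), (1 - g x)) -
          (∫ x in Set.Ioi (Λ τs), (1 - V x))| = 0 := le_antisymm hle this
      have := abs_eq_zero.1 h0
      linarith
    exact heq.symm
  exact ⟨part1, key, key.trans hmass⟩
end

section
/- Let β ∈ (0,1) and define g(x) = 0 for x ∈ [0,1] and g(x) = 1 + β/x^{β+1} for x > 1 (i.e. g = 1 − h with h = 1 on [0,1], h(x) = −β x^{−β−1} for x > 1). Then ∫_0^∞ g(x) e^{−λx} dx = 1/λ − Γ(1−β) λ^{β} + O(λ) as λ → 0, where Γ denotes the Gamma function; in particular lim sup_{λ→0} (1/λ) ∫_0^∞ (1 − g(x)) e^{−λx} dx = +∞. -/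
open MeasureTheory Filter Set
open scoped Topology

namespace HeavyAux

variable {β l : ℝ}

lemma exp_integral_Ioi (hl : 0 < l) (a : ℝ) :
    ∫ x in Ioi a, Real.exp (-(l * x)) = Real.exp (-(l * a)) / l := by
  rw [integral_comp_mul_left_Ioi (fun u => Real.exp (-u)) a hl, integral_exp_neg_Ioi,
    smul_eq_mul]
  ring

lemma exp_intOn (hl : 0 < l) (a : ℝ) :
    IntegrableOn (fun x : ℝ => Real.exp (-(l * x))) (Ioi a) := by
  simpa [neg_mul] using exp_neg_integrableOn_Ioi a hl

lemma psi_intOn (hβ0 : 0 < β) (hl : 0 < l) :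
    IntegrableOn (fun u : ℝ => Real.exp (-u) * u ^ (-β - 1)) (Ioi l) := by
  have hmeas : AEStronglyMeasurable (fun u : ℝ => Real.exp (-u) * u ^ (-β - 1))
      (volume.restrict (Ioi l)) := by
    refine ContinuousOn.aestronglyMeasurable ?_ measurableSet_Ioi
    exact (Real.continuous_exp.comp continuous_neg).continuousOn.mul
      (continuousOn_id.rpow_const fun x hx => Or.inl (hl.trans hx).ne')
  have hint : IntegrableOn (fun u : ℝ => l ^ (-β - 1) * Real.exp (-(1 * u))) (Ioi l) :=
    (exp_intOn one_pos l).const_mul _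
  refine Integrable.mono hint hmeas ?_
  refine (ae_restrict_iff' measurableSet_Ioi).2 (ae_of_all _ fun u hu => ?_)
  have hu0 : 0 < u := hl.trans hu
  have h1 : u ^ (-β - 1) ≤ l ^ (-β - 1) :=
    Real.rpow_le_rpow_of_nonpos hl (le_of_lt hu) (by linarith)
  have h2 : (0:ℝ) ≤ u ^ (-β - 1) := Real.rpow_nonneg hu0.le _
  have h3 : (0:ℝ) < Real.exp (-u) := Real.exp_pos _
  rw [Real.norm_eq_abs, Real.norm_eq_abs, abs_of_nonneg (by positivity),
    abs_of_nonneg (by positivity), one_mul]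
  calc Real.exp (-u) * u ^ (-β - 1) ≤ Real.exp (-u) * l ^ (-β - 1) := by
        exact mul_le_mul_of_nonneg_left h1 h3.le
    _ = l ^ (-β - 1) * Real.exp (-u) := by ring

lemma phi_intOn (hβ1 : β < 1) {a : ℝ} (ha : 0 ≤ a) :
    IntegrableOn (fun u : ℝ => Real.exp (-u) * u ^ (-β)) (Ioi a) := by
  have h := Real.GammaIntegral_convergent (s := 1 - β) (by linarith)
  have he : (1 - β - 1 : ℝ) = -β := by ring
  rw [he] at h
  exact h.mono_set (Ioi_subset_Ioi ha)

lemma ftc (hβ0 : 0 < β) (hβ1 : β < 1) (hl : 0 < l) :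
    ∫ u in Ioi l, (β * (Real.exp (-u) * u ^ (-β - 1)) + Real.exp (-u) * u ^ (-β))
      = l ^ (-β) * Real.exp (-l) := by
  have hderiv : ∀ u ∈ Ici l, HasDerivAt (fun u : ℝ => -(u ^ (-β) * Real.exp (-u)))
      (β * (Real.exp (-u) * u ^ (-β - 1)) + Real.exp (-u) * u ^ (-β)) u := by
    intro u hu
    have hu0 : u ≠ 0 := (hl.trans_le hu).ne'
    have h1 : HasDerivAt (fun u : ℝ => u ^ (-β)) (-β * u ^ (-β - 1)) u :=
      Real.hasDerivAt_rpow_const (Or.inl hu0)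
    have h2 : HasDerivAt (fun u : ℝ => Real.exp (-u)) (Real.exp (-u) * -1) u :=
      (hasDerivAt_neg u).exp
    have h3 := (h1.mul h2).neg
    exact h3.congr_deriv (by ring)
  have hint : IntegrableOn
      (fun u : ℝ => β * (Real.exp (-u) * u ^ (-β - 1)) + Real.exp (-u) * u ^ (-β)) (Ioi l) :=
    ((psi_intOn hβ0 hl).const_mul β).add (phi_intOn hβ1 hl.le)
  have htend : Tendsto (fun u : ℝ => -(u ^ (-β) * Real.exp (-u))) atTop (𝓝 0) := by
    have := ((tendsto_rpow_neg_atTop hβ0).mul Real.tendsto_exp_neg_atTop_nhds_zero).neg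
    simpa using this
  rw [integral_Ioi_of_hasDerivAt_of_tendsto' hderiv hint htend]
  ring

lemma gamma_split (hβ0 : 0 < β) (hβ1 : β < 1) (hl : 0 < l) :
    ∫ u in Ioi l, Real.exp (-u) * u ^ (-β)
      = Real.Gamma (1 - β) - ∫ u in Ioc 0 l, Real.exp (-u) * u ^ (-β) := by
  have h := Real.Gamma_eq_integral (s := 1 - β) (by linarith)
  have he : (1 - β - 1 : ℝ) = -β := by ring
  rw [he] at h
  have hsum : (∫ u in Ioc (0:ℝ) l, Real.exp (-u) * u ^ (-β))
      + (∫ u in Ioi l, Real.exp (-u) * u ^ (-β))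
      = ∫ u in Ioi (0:ℝ), Real.exp (-u) * u ^ (-β) := by
    rw [← setIntegral_union (Ioc_disjoint_Ioi le_rfl) measurableSet_Ioi
        ((phi_intOn hβ1 le_rfl).mono_set Ioc_subset_Ioi_self) (phi_intOn hβ1 hl.le),
      Ioc_union_Ioi_eq_Ioi hl.le]
  rw [← h] at hsum
  linarith

lemma E_nonneg : 0 ≤ ∫ u in Ioc (0:ℝ) l, Real.exp (-u) * u ^ (-β) := by
  refine setIntegral_nonneg measurableSet_Ioc fun u hu => ?_
  have := hu.1
  positivity

lemma E_le (hβ0 : 0 < β) (hβ1 : β < 1) (hl : 0 < l) :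
    ∫ u in Ioc (0:ℝ) l, Real.exp (-u) * u ^ (-β) ≤ l ^ (1 - β) / (1 - β) := by
  have hrint : IntegrableOn (fun u : ℝ => u ^ (-β)) (Ioc 0 l) := by
    rw [← intervalIntegrable_iff_integrableOn_Ioc_of_le hl.le]
    exact intervalIntegral.intervalIntegrable_rpow' (by linarith)
  have h1 : (∫ u in Ioc (0:ℝ) l, Real.exp (-u) * u ^ (-β)) ≤ ∫ u in Ioc (0:ℝ) l, u ^ (-β) := by
    refine setIntegral_mono_on
      ((phi_intOn hβ1 le_rfl).mono_set Ioc_subset_Ioi_self) hrint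
      measurableSet_Ioc fun u hu => ?_
    have h0 : (0:ℝ) ≤ u ^ (-β) := Real.rpow_nonneg hu.1.le _
    have hle : Real.exp (-u) ≤ 1 := Real.exp_le_one_iff.2 (by linarith [hu.1])
    exact mul_le_of_le_one_left h0 hle
  have h2 : (∫ u in Ioc (0:ℝ) l, u ^ (-β)) = l ^ (1 - β) / (1 - β) := by
    rw [← intervalIntegral.integral_of_le hl.le,
      integral_rpow (Or.inl (by linarith)),
      Real.zero_rpow (by linarith : -β + 1 ≠ 0)]
    have he : -β + 1 = 1 - β := by ring
    rw [he]
    ring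
  linarith

lemma subst (hβ0 : 0 < β) (hl : 0 < l) :
    ∫ x in Ioi (1:ℝ), (x ^ (β + 1))⁻¹ * Real.exp (-(l * x))
      = l ^ β * ∫ u in Ioi l, Real.exp (-u) * u ^ (-β - 1) := by
  have hlp : (0:ℝ) < l ^ (β + 1) := Real.rpow_pos_of_pos hl _
  have key : ∀ x ∈ Ioi (1:ℝ),
      (x ^ (β + 1))⁻¹ * Real.exp (-(l * x))
        = l ^ (β + 1) * (Real.exp (-(l * x)) * (l * x) ^ (-β - 1)) := by
    intro x hx
    have hx0 : (0:ℝ) < x := lt_trans one_pos hx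
    have hmul : (l * x) ^ (-β - 1) = l ^ (-β - 1) * x ^ (-β - 1) :=
      Real.mul_rpow hl.le hx0.le
    have h1 : x ^ (-β - 1) = (x ^ (β + 1))⁻¹ := by
      rw [show (-β - 1 : ℝ) = -(β + 1) by ring, Real.rpow_neg hx0.le]
    have h2 : l ^ (β + 1) * l ^ (-β - 1) = 1 := by
      rw [← Real.rpow_add hl]
      norm_num
    rw [hmul, h1]
    calc (x ^ (β + 1))⁻¹ * Real.exp (-(l * x))
        = (l ^ (β + 1) * l ^ (-β - 1)) * ((x ^ (β + 1))⁻¹ * Real.exp (-(l * x))) := by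
          rw [h2]; ring
      _ = l ^ (β + 1) * (Real.exp (-(l * x)) * (l ^ (-β - 1) * (x ^ (β + 1))⁻¹)) := by ring
  rw [setIntegral_congr_fun measurableSet_Ioi key, integral_const_mul,
    integral_comp_mul_left_Ioi (fun u => Real.exp (-u) * u ^ (-β - 1)) 1 hl,
    mul_one, smul_eq_mul]
  rw [show l ^ (β + 1) = l ^ β * l from Real.rpow_add_one hl.ne' β]
  field_simp

end HeavyAux

open HeavyAux

/-- Small-lambda asymptotics of the Laplace transform for the heavy-tailed density
g(x) = 0 on [0,1], g(x) = 1 + beta x^{-beta-1} for x > 1 (0 < beta < 1):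
int_0^inf g(x) e^{-l x} dx = 1/l - Gamma(1-beta) l^beta + O(l) as l -> 0, and
limsup_{l -> 0+} (1/l) int_0^inf (1-g(x)) e^{-l x} dx = +infinity. -/
theorem heavy_tail_laplace_asymptotics (β : ℝ) (hβ0 : 0 < β) (hβ1 : β < 1)
    (g : ℝ → ℝ) (hg : ∀ x : ℝ, g x = if x ≤ 1 then 0 else 1 + β / x ^ (β + 1)) :
    (∃ C : ℝ, 0 < C ∧ ∃ δ : ℝ, 0 < δ ∧ ∀ l : ℝ, 0 < l → l < δ →
      |(∫ x in Set.Ioi (0:ℝ), g x * Real.exp (-l * x)) -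
          (1 / l - Real.Gamma (1 - β) * l ^ β)| ≤ C * l) ∧
    (∀ M : ℝ, ∃ᶠ l in nhdsWithin (0:ℝ) (Set.Ioi 0),
      M < (1 / l) * ∫ x in Set.Ioi (0:ℝ), (1 - g x) * Real.exp (-l * x)) := by
  have h1β : (0:ℝ) < 1 - β := by linarith
  set Γ : ℝ := Real.Gamma (1 - β) with hΓdef
  have hΓpos : 0 < Γ := Real.Gamma_pos_of_pos h1β
  set C : ℝ := 2 + 1 / (1 - β) with hCdef
  have hCpos : 0 < C := by positivity
  -- decomposition of g x * exp(-(l x)) on Ioi 1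
  have hEq : ∀ l : ℝ, ∀ x ∈ Ioi (1:ℝ),
      Real.exp (-(l * x)) + β * ((x ^ (β + 1))⁻¹ * Real.exp (-(l * x)))
        = g x * Real.exp (-(l * x)) := by
    intro l x hx
    rw [hg x, if_neg (not_le.2 hx), div_eq_mul_inv]
    ring
  -- integrability of the tail part
  have hT : ∀ l : ℝ, 0 < l →
      IntegrableOn (fun x : ℝ => (x ^ (β + 1))⁻¹ * Real.exp (-(l * x))) (Ioi 1) := by
    intro l hl
    have hmeas : AEStronglyMeasurable (fun x : ℝ => (x ^ (β + 1))⁻¹ * Real.exp (-(l * x)))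
        (volume.restrict (Ioi 1)) := by
      refine ContinuousOn.aestronglyMeasurable ?_ measurableSet_Ioi
      refine ContinuousOn.mul (ContinuousOn.inv₀
        (continuousOn_id.rpow_const fun x hx => Or.inr (by linarith))
        fun x hx => ?_) ?_
      · exact (Real.rpow_pos_of_pos (lt_trans one_pos hx) _).ne'
      · exact (Real.continuous_exp.comp (continuous_const.mul continuous_id).neg).continuousOn
    refine Integrable.mono (exp_intOn hl 1) hmeas ?_
    refine (ae_restrict_iff' measurableSet_Ioi).2 (ae_of_all _ fun x hx => ?_)
    have hx1 : (1:ℝ) ≤ x := le_of_lt hx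
    have hx0 : (0:ℝ) < x := lt_of_lt_of_le one_pos hx1
    have hp1 : (1:ℝ) ≤ x ^ (β + 1) := by
      have := Real.rpow_le_rpow_of_exponent_le hx1 (by linarith : (0:ℝ) ≤ β + 1)
      simpa using this
    have hinv : (x ^ (β + 1))⁻¹ ≤ 1 := inv_le_one_of_one_le₀ hp1
    have hinv0 : (0:ℝ) ≤ (x ^ (β + 1))⁻¹ := by positivity
    have hexp : (0:ℝ) < Real.exp (-(l * x)) := Real.exp_pos _
    rw [Real.norm_eq_abs, Real.norm_eq_abs, abs_of_nonneg (by positivity),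
      abs_of_pos hexp]
    exact mul_le_of_le_one_left hexp.le hinv
  -- integrability of g * exp on Ioi 1 and Ioi 0
  have hFint1 : ∀ l : ℝ, 0 < l →
      IntegrableOn (fun x : ℝ => g x * Real.exp (-(l * x))) (Ioi 1) := by
    intro l hl
    have h := (exp_intOn hl 1).add ((hT l hl).const_mul β)
    exact IntegrableOn.congr_fun h (fun x hx => hEq l x hx) measurableSet_Ioi
  have hFint0 : ∀ l : ℝ, 0 < l →
      IntegrableOn (fun x : ℝ => g x * Real.exp (-(l * x))) (Ioi 0) := by
    intro l hl
    rw [← Ioc_union_Ioi_eq_Ioi (zero_le_one (α := ℝ))]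
    refine IntegrableOn.union ?_ (hFint1 l hl)
    refine (integrableOn_zero).congr_fun (fun x hx => ?_) measurableSet_Ioc
    rw [hg x, if_pos hx.2, zero_mul]
  -- the exact formula
  have hform : ∀ l : ℝ, 0 < l →
      (∫ x in Ioi (0:ℝ), g x * Real.exp (-(l * x)))
        = Real.exp (-l) / l + Real.exp (-l) - Γ * l ^ β
          + l ^ β * ∫ u in Ioc (0:ℝ) l, Real.exp (-u) * u ^ (-β) := by
    intro l hl
    have hzero : (∫ x in Ioc (0:ℝ) 1, g x * Real.exp (-(l * x))) = 0 := by
      rw [setIntegral_congr_fun measurableSet_Ioc (g := fun _ => (0:ℝ))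
        (fun x hx => by rw [hg x, if_pos hx.2]; simp)]
      simp
    have hsplit : (∫ x in Ioi (0:ℝ), g x * Real.exp (-(l * x)))
        = ∫ x in Ioi (1:ℝ), g x * Real.exp (-(l * x)) := by
      rw [← Ioc_union_Ioi_eq_Ioi (zero_le_one (α := ℝ)),
        setIntegral_union (Ioc_disjoint_Ioi le_rfl) measurableSet_Ioi
          (((hFint0 l hl).mono_set (by
            rw [← Ioc_union_Ioi_eq_Ioi (zero_le_one (α := ℝ))]; exact subset_union_left)))
          (hFint1 l hl), hzero, zero_add]
    have hIoi1 : (∫ x in Ioi (1:ℝ), g x * Real.exp (-(l * x)))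
        = Real.exp (-l) / l
          + β * (l ^ β * ∫ u in Ioi l, Real.exp (-u) * u ^ (-β - 1)) := by
      rw [← setIntegral_congr_fun measurableSet_Ioi (hEq l),
        integral_add (exp_intOn hl 1) ((hT l hl).const_mul β),
        integral_const_mul, exp_integral_Ioi hl 1, mul_one, subst hβ0 hl]
    have hA : β * (∫ u in Ioi l, Real.exp (-u) * u ^ (-β - 1))
        + (∫ u in Ioi l, Real.exp (-u) * u ^ (-β)) = l ^ (-β) * Real.exp (-l) := by
      rw [← integral_const_mul, ← integral_add ((psi_intOn hβ0 hl).const_mul β)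
        (phi_intOn hβ1 hl.le)]
      exact ftc hβ0 hβ1 hl
    have hB := gamma_split hβ0 hβ1 hl
    have hcancel : l ^ β * l ^ (-β) = 1 := by
      rw [← Real.rpow_add hl]; norm_num
    set A : ℝ := ∫ u in Ioi l, Real.exp (-u) * u ^ (-β - 1) with hAdef
    set E : ℝ := ∫ u in Ioc (0:ℝ) l, Real.exp (-u) * u ^ (-β) with hEdef
    rw [hsplit, hIoi1]
    have h5 : β * (l ^ β * A) = Real.exp (-l) - Γ * l ^ β + l ^ β * E := by
      have h6 : β * A = l ^ (-β) * Real.exp (-l)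
          - (∫ u in Ioi l, Real.exp (-u) * u ^ (-β)) := by linarith [hA]
      have h7 : β * (l ^ β * A) = l ^ β * (β * A) := by ring
      rw [h7, h6, hB, mul_sub, ← mul_assoc, hcancel, one_mul]
      ring
    rw [h5]
    ring
  -- the error bound
  have hkey : ∀ l : ℝ, 0 < l → l < 1 →
      |(∫ x in Ioi (0:ℝ), g x * Real.exp (-(l * x))) - (1 / l - Γ * l ^ β)| ≤ C * l := by
    intro l hl hl1
    set E : ℝ := ∫ u in Ioc (0:ℝ) l, Real.exp (-u) * u ^ (-β) with hEdef
    have herr : (∫ x in Ioi (0:ℝ), g x * Real.exp (-(l * x))) - (1 / l - Γ * l ^ β)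
        = (Real.exp (-l) - 1 + l) / l + (Real.exp (-l) - 1) + l ^ β * E := by
      rw [hform l hl]
      field_simp
      ring
    have hb1 : |(Real.exp (-l) - 1 + l) / l| ≤ l := by
      have habs : |(-l : ℝ)| ≤ 1 := by rw [abs_neg, abs_of_pos hl]; linarith
      have h := Real.abs_exp_sub_one_sub_id_le habs
      rw [abs_div, abs_of_pos hl, div_le_iff₀ hl]
      calc |Real.exp (-l) - 1 + l| = |Real.exp (-l) - 1 - (-l)| := by ring_nf
        _ ≤ (-l) ^ 2 := h
        _ = l * l := by ring
    have hb2 : |Real.exp (-l) - 1| ≤ l := by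
      have hub : Real.exp (-l) ≤ 1 := Real.exp_le_one_iff.2 (by linarith)
      have hlb : 1 - l ≤ Real.exp (-l) := by linarith [Real.add_one_le_exp (-l)]
      rw [abs_le]
      constructor <;> linarith
    have hb3 : |l ^ β * E| ≤ 1 / (1 - β) * l := by
      have hE0 : 0 ≤ E := E_nonneg
      have hEle : E ≤ l ^ (1 - β) / (1 - β) := E_le hβ0 hβ1 hl
      have hlb0 : (0:ℝ) < l ^ β := Real.rpow_pos_of_pos hl _
      have hmul : l ^ β * l ^ (1 - β) = l := by
        rw [← Real.rpow_add hl]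
        norm_num
      rw [abs_of_nonneg (by positivity)]
      calc l ^ β * E ≤ l ^ β * (l ^ (1 - β) / (1 - β)) :=
            mul_le_mul_of_nonneg_left hEle hlb0.le
        _ = 1 / (1 - β) * l := by rw [mul_div_assoc', hmul]; ring
    calc |(∫ x in Ioi (0:ℝ), g x * Real.exp (-(l * x))) - (1 / l - Γ * l ^ β)|
        = |(Real.exp (-l) - 1 + l) / l + (Real.exp (-l) - 1) + l ^ β * E| := by rw [herr]
      _ ≤ |(Real.exp (-l) - 1 + l) / l + (Real.exp (-l) - 1)| + |l ^ β * E| := abs_add_le _ _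
      _ ≤ |(Real.exp (-l) - 1 + l) / l| + |Real.exp (-l) - 1| + |l ^ β * E| := by
          linarith [abs_add_le ((Real.exp (-l) - 1 + l) / l) (Real.exp (-l) - 1)]
      _ ≤ l + l + 1 / (1 - β) * l := by linarith
      _ = C * l := by rw [hCdef]; ring
  constructor
  · refine ⟨C, hCpos, 1, one_pos, fun l hl hl1 => ?_⟩
    have := hkey l hl hl1
    simpa [neg_mul] using this
  · intro M
    -- rewrite the (1-g) integral
    have hsub : ∀ l : ℝ, 0 < l →
        (∫ x in Ioi (0:ℝ), (1 - g x) * Real.exp (-l * x))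
          = 1 / l - ∫ x in Ioi (0:ℝ), g x * Real.exp (-(l * x)) := by
      intro l hl
      have : (∫ x in Ioi (0:ℝ), (1 - g x) * Real.exp (-l * x))
          = ∫ x in Ioi (0:ℝ), (Real.exp (-(l * x)) - g x * Real.exp (-(l * x))) := by
        refine setIntegral_congr_fun measurableSet_Ioi fun x _ => ?_
        rw [neg_mul]
        ring
      rw [this, integral_sub (exp_intOn hl 0) (hFint0 l hl), exp_integral_Ioi hl 0]
      norm_num
    have htend : Tendsto (fun l : ℝ => Γ * l ^ (β - 1)) (𝓝[>] (0:ℝ)) atTop := by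
      have h1 : Tendsto (fun l : ℝ => (l⁻¹) ^ (1 - β)) (𝓝[>] (0:ℝ)) atTop :=
        (tendsto_rpow_atTop h1β).comp tendsto_inv_nhdsGT_zero
      have heq : (fun l : ℝ => (l⁻¹) ^ (1 - β)) =ᶠ[𝓝[>] (0:ℝ)] fun l : ℝ => l ^ (β - 1) := by
        filter_upwards [self_mem_nhdsWithin] with x hx
        rw [← Real.rpow_neg_one x, ← Real.rpow_mul (le_of_lt hx)]
        congr 1
        ring
      exact (h1.congr' heq).const_mul_atTop hΓpos
    have hev1 : ∀ᶠ l in 𝓝[>] (0:ℝ), M + C < Γ * l ^ (β - 1) :=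
      htend.eventually_gt_atTop (M + C)
    have hev2 : Ioo (0:ℝ) 1 ∈ 𝓝[>] (0:ℝ) := Ioo_mem_nhdsGT one_pos
    refine Filter.Eventually.frequently ?_
    filter_upwards [hev1, hev2] with l hlM hlo
    obtain ⟨hl, hl1⟩ := hlo
    have hkeyl := hkey l hl hl1
    have hIle : (∫ x in Ioi (0:ℝ), g x * Real.exp (-(l * x)))
        ≤ 1 / l - Γ * l ^ β + C * l := by
      have := abs_le.1 hkeyl
      linarith [this.2]
    have hTval : (1 / l) * (∫ x in Ioi (0:ℝ), (1 - g x) * Real.exp (-l * x))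
        ≥ Γ * l ^ (β - 1) - C := by
      rw [hsub l hl]
      have hlow : Γ * l ^ β - C * l
          ≤ 1 / l - ∫ x in Ioi (0:ℝ), g x * Real.exp (-(l * x)) := by linarith
      have hpos : (0:ℝ) < 1 / l := by positivity
      have h3 := mul_le_mul_of_nonneg_left hlow hpos.le
      have h4 : (1 / l) * (Γ * l ^ β - C * l) = Γ * l ^ (β - 1) - C := by
        rw [Real.rpow_sub_one hl.ne' β]
        field_simp
      linarith [h3, h4.symm.le]
    exact lt_of_lt_of_le (by linarith : M < Γ * l ^ (β - 1) - C) hTval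
end
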